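/- arXiv:math/0701096 — 5 statements merged into one kernel-verified Lean document; each statement's English description precedes it below -/
import Mathlib

section
/- Let σ = a₁a₂⋯a_{n-1} be a permutation of {2,3,…,n}. For 0 ≤ i ≤ n-1, let σᵢ be the permutation of {1,…,n} obtained by inserting 1 into σ at position i (σ₀ places 1 at the front, and σᵢ places 1 immediately after aᵢ). Then the major indices maj(σ₀), maj(σ₁), …, maj(σ_{n-1}) are all distinct and form the set {maj(σ), maj(σ)+1, …, maj(σ)+n-1}. -/
open Finset
open scoped Classical

/-- descents of a list: number of positions i with l_i > l_{i+1} -/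
def desList (l : List ℕ) : ℕ := ((l.zip l.tail).filter (fun p => p.2 < p.1)).length

/-- major index of a list (1-based positions) -/
def majList (l : List ℕ) : ℕ :=
  ∑ i ∈ Finset.range (l.length - 1), if l.getD (i+1) 0 < l.getD i 0 then i + 1 else 0

/-- inversion number of a list -/
def invList (l : List ℕ) : ℕ :=
  ((Finset.range l.length ×ˢ Finset.range l.length).filter
    (fun p => p.1 < p.2 ∧ l.getD p.2 0 < l.getD p.1 0)).card

/-- number of 2-crossings of an arc set -/
def cr2 {α : Type*} [LinearOrder α] (A : Finset (α × α)) : ℕ :=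
  ((A ×ˢ A).filter (fun p => p.1.1 < p.2.1 ∧ p.2.1 < p.1.2 ∧ p.1.2 < p.2.2)).card

/-- the label of an arc: arcs are labeled 1,…,k from right to left by left-hand endpoints -/
def labelArc {α : Type*} [LinearOrder α] (A : Finset (α × α)) (e : α × α) : ℕ :=
  (A.filter (fun f => e.1 < f.1)).card + 1

/-- p-major index of an arc set: process endpoints in decreasing order, maintaining the
sequence σ of (arcs corresponding to) labels; at a left endpoint delete its arc, at a
right endpoint prepend the arc ending there and add the number of descents of the
label sequence σ. -/
noncomputable def pmajArcs {α : Type*} [LinearOrder α] (A : Finset (α × α)) : ℕ :=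
  (((((A.image Prod.fst) ∪ (A.image Prod.snd)).sort (· ≤ ·)).reverse).foldl
    (fun (st : List (α × α) × ℕ) i =>
      let σ₁ := st.1.filter (fun e => e.1 ≠ i)
      let ends := (A.filter (fun e => e.2 = i)).toList
      let σ₂ := ends ++ σ₁
      (σ₂, st.2 + if ends.isEmpty then 0 else desList (σ₂.map (labelArc A))))
    ([], 0)).2

/-- arcs of the standard representation of a partition of [n] = {1,…,n}:
pairs of consecutive elements of a block -/
noncomputable def arcsOf {n : ℕ} (P : Finpartition (Finset.Icc 1 n)) : Finset (ℕ × ℕ) :=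
  ((Finset.Icc 1 n) ×ˢ (Finset.Icc 1 n)).filter (fun e =>
    e.1 < e.2 ∧ ∃ B ∈ P.parts, e.1 ∈ B ∧ e.2 ∈ B ∧ ∀ k ∈ B, e.1 < k → k < e.2 → False)

/-- the set of minimal block elements of a partition of [n] -/
noncomputable def minsetOf {n : ℕ} (P : Finpartition (Finset.Icc 1 n)) : Finset ℕ :=
  (Finset.Icc 1 n).filter (fun i => ∃ B ∈ P.parts, i ∈ B ∧ ∀ j ∈ B, i ≤ j)

/-- the set of maximal block elements of a partition of [n] -/
noncomputable def maxsetOf {n : ℕ} (P : Finpartition (Finset.Icc 1 n)) : Finset ℕ :=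
  (Finset.Icc 1 n).filter (fun i => ∃ B ∈ P.parts, i ∈ B ∧ ∀ j ∈ B, j ≤ i)

noncomputable instance finpartitionFintype (s : Finset ℕ) : Fintype (Finpartition s) := by
  apply Fintype.ofInjective
    (fun P : Finpartition s =>
      (⟨P.parts, by
        simp only [Finset.mem_powerset]
        intro t ht
        exact Finset.mem_powerset.2 (P.le ht)⟩ : {t // t ∈ s.powerset.powerset}))
  intro P Q h
  have : P.parts = Q.parts := congrArg Subtype.val h
  cases P; cases Q; simpa using this

/-- P_n(S,T): partitions of [n] with block minima S and block maxima T -/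
noncomputable def pnST (n : ℕ) (S T : Finset ℕ) : Finset (Finpartition (Finset.Icc 1 n)) :=
  Finset.univ.filter (fun P => minsetOf P = S ∧ maxsetOf P = T)

/-- h(i) = |T ∩ {i+1,…,n}| − |S ∩ {i+1,…,n}| -/
def hST (n : ℕ) (S T : Finset ℕ) (i : ℕ) : ℕ :=
  (T ∩ Finset.Icc (i+1) n).card - (S ∩ Finset.Icc (i+1) n).card

def D0 (l : List ℕ) : Finset ℕ :=
  (Finset.range (l.length - 1)).filter (fun j => l.getD (j+1) 0 < l.getD j 0)

lemma getD_insertIdx_lt (l : List ℕ) (i j : ℕ) (hj : j < i) (hjl : j < l.length) :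
    (l.insertIdx i 1).getD j 0 = l.getD j 0 := by
  rw [List.getD_eq_getElem _ _ (by exact hjl.trans_le List.length_le_length_insertIdx),
    List.getD_eq_getElem _ _ hjl, List.getElem_insertIdx_of_lt hj _]

lemma getD_insertIdx_self (l : List ℕ) (i : ℕ) (hi : i ≤ l.length) :
    (l.insertIdx i 1).getD i 0 = 1 := by
  rw [List.getD_eq_getElem _ _ (by rw [List.length_insertIdx_of_le_length hi]; omega),
    List.getElem_insertIdx_self _]

lemma getD_insertIdx_gt (l : List ℕ) (i j : ℕ) (hij : i < j) (hjl : j - 1 < l.length) :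
    (l.insertIdx i 1).getD j 0 = l.getD (j-1) 0 := by
  have h1 : i + (j - 1 - i) = j - 1 := by omega
  have h3 : j - 1 + 1 = j := by omega
  rw [List.getD_eq_getElem _ _ (by rw [List.length_insertIdx_of_le_length (by omega)]; omega),
    List.getD_eq_getElem _ _ hjl]
  exact List.getElem_insertIdx_of_gt hij _

lemma maj_insert (l : List ℕ) (hent : ∀ j, j < l.length → 2 ≤ l.getD j 0)
    (i : ℕ) (hi : i ≤ l.length) :
    majList (l.insertIdx i 1) =
      majList l + ((if i = 0 ∨ i - 1 ∈ D0 l then 0 else i)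
        + ((D0 l).filter (fun j => i ≤ j)).card) := by
  set L := l.length with hL
  set F : ℕ → ℕ := fun j => if l.getD (j+1) 0 < l.getD j 0 then j+1 else 0 with hF
  have hlen : (l.insertIdx i 1).length = L + 1 := List.length_insertIdx_of_le_length hi _
  have step1 : majList (l.insertIdx i 1) =
      ∑ j ∈ Finset.range L, ((if j + 1 < i then F j else 0)
        + (if j + 1 = i then i else 0)
        + (if i + 1 ≤ j then (if l.getD j 0 < l.getD (j-1) 0 then j+1 else 0) else 0)) := by
    simp only [majList, hlen, Nat.add_sub_cancel]
    refine Finset.sum_congr rfl (fun j hj => ?_)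
    rw [Finset.mem_range] at hj
    rcases (by omega : j + 1 < i ∨ j + 1 = i ∨ j = i ∨ i + 1 ≤ j) with h | h | h | h
    · rw [getD_insertIdx_lt l i j (by omega) (by omega),
        getD_insertIdx_lt l i (j+1) (by omega) (by omega),
        if_pos (show j + 1 < i from h), if_neg (show ¬ j + 1 = i by omega),
        if_neg (show ¬ i + 1 ≤ j by omega)]
      simp [hF]
    · have h2 : 1 < l.getD j 0 := by have := hent j (by omega); omega
      rw [h, getD_insertIdx_self l i hi, getD_insertIdx_lt l i j (by omega) (by omega),
        if_pos h2, if_neg (show ¬ i < i by omega), if_pos rfl,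
        if_neg (show ¬ i + 1 ≤ j by omega)]
      omega
    · have h2 : 2 ≤ l.getD j 0 := hent j (by omega)
      rw [← h, getD_insertIdx_self l j (by omega),
        getD_insertIdx_gt l j (j+1) (by omega) (by omega)]
      simp only [Nat.add_sub_cancel]
      rw [if_neg (show ¬ l.getD j 0 < 1 by omega), if_neg (show ¬ j + 1 < j by omega),
        if_neg (show ¬ j + 1 = j by omega), if_neg (show ¬ j + 1 ≤ j by omega)]
    · rw [getD_insertIdx_gt l i j (by omega) (by omega),
        getD_insertIdx_gt l i (j+1) (by omega) (by omega)]
      simp only [Nat.add_sub_cancel]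
      rw [if_neg (show ¬ j + 1 < i by omega), if_neg (show ¬ j + 1 = i by omega),
        if_pos (show i + 1 ≤ j from h)]
      simp
  have hA : (∑ j ∈ Finset.range L, if j + 1 < i then F j else 0)
      = ∑ j ∈ Finset.range (i-1), F j := by
    rw [← Finset.sum_filter]
    congr 1
    ext x
    simp only [Finset.mem_filter, Finset.mem_range]
    omega
  have hB : (∑ j ∈ Finset.range L, if j + 1 = i then i else 0)
      = if i = 0 then 0 else i := by
    rcases Nat.eq_zero_or_pos i with h | h
    · subst h; simp
    · rw [if_neg (by omega)]
      have heq : ∀ j, (if j + 1 = i then i else 0) = (if j = i - 1 then i else 0) := by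
        intro j
        by_cases hji : j + 1 = i
        · rw [if_pos hji, if_pos (by omega)]
        · rw [if_neg hji, if_neg (by omega)]
      simp only [heq]
      rw [Finset.sum_ite_eq' (Finset.range L) (i-1) (fun _ => i)]
      rw [if_pos (by simp; omega)]
  have hC : (∑ j ∈ Finset.range L,
        if i + 1 ≤ j then (if l.getD j 0 < l.getD (j-1) 0 then j+1 else 0) else 0)
      = (∑ j ∈ Finset.Ico i (L-1), F j) + ((D0 l).filter (fun j => i ≤ j)).card := by
    rw [← Finset.sum_filter]
    have hfe : (Finset.range L).filter (fun j => i + 1 ≤ j) = Finset.Ico (i+1) L := by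
      ext x; simp only [Finset.mem_filter, Finset.mem_range, Finset.mem_Ico]; omega
    rw [hfe, Finset.sum_Ico_eq_sum_range]
    have hrw : ∀ k, (if l.getD (i+1+k) 0 < l.getD (i+1+k-1) 0 then i+1+k+1 else 0)
        = F (i + k) + (if l.getD (i+k+1) 0 < l.getD (i+k) 0 then 1 else 0) := by
      intro k
      have e1 : i + 1 + k - 1 = i + k := by omega
      have e2 : i + 1 + k = i + k + 1 := by omega
      rw [e1, e2]
      simp only [hF]
      split <;> simp
    simp only [hrw]
    rw [Finset.sum_add_distrib]
    have e3 : L - (i+1) = L - 1 - i := by omega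
    rw [e3]
    congr 1
    · rw [Finset.sum_Ico_eq_sum_range]
    · rw [← Finset.sum_Ico_eq_sum_range (fun j => if l.getD (j+1) 0 < l.getD j 0 then 1 else 0)]
      rw [← Finset.card_filter]
      congr 1
      ext x
      simp only [Finset.mem_filter, Finset.mem_Ico, D0, Finset.mem_range]
      constructor
      · rintro ⟨⟨h1, h2⟩, h3⟩; exact ⟨⟨h2, h3⟩, h1⟩
      · rintro ⟨⟨h1, h2⟩, h3⟩; exact ⟨⟨h3, h1⟩, h2⟩
  have hM : majList l = (∑ j ∈ Finset.range (i-1), F j)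
      + (if i - 1 ∈ D0 l then i else 0) + (∑ j ∈ Finset.Ico i (L-1), F j) := by
    rcases Nat.eq_zero_or_pos i with h | h
    · subst h
      have hmaj : majList l = ∑ j ∈ Finset.range (L-1), F j := rfl
      rw [hmaj, ← Finset.range_eq_Ico]
      simp
    · have hsplit : (∑ j ∈ Finset.range (i-1), F j) + (∑ j ∈ Finset.Ico (i-1) (L-1), F j)
          = ∑ j ∈ Finset.range (L-1), F j := Finset.sum_range_add_sum_Ico F (by omega)
      have hmaj : majList l = ∑ j ∈ Finset.range (L-1), F j := rfl
      rcases (by omega : i - 1 < L - 1 ∨ L - 1 ≤ i - 1) with h2 | h2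
      · rw [Finset.sum_eq_sum_Ico_succ_bot h2 F] at hsplit
        have e4 : i - 1 + 1 = i := by omega
        rw [e4] at hsplit
        have e5 : (if i - 1 ∈ D0 l then i else 0) = F (i-1) := by
          simp only [D0, Finset.mem_filter, Finset.mem_range, hF]
          by_cases hc : l.getD (i-1+1) 0 < l.getD (i-1) 0
          · rw [if_pos ⟨h2, hc⟩, if_pos hc]; omega
          · rw [if_neg (by tauto), if_neg hc]
        rw [hmaj, ← hsplit, e5]
        ring
      · have e6 : Finset.Ico (i-1) (L-1) = ∅ := Finset.Ico_eq_empty (by omega)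
        have e7 : Finset.Ico i (L-1) = ∅ := Finset.Ico_eq_empty (by omega)
        have e8 : i - 1 ∉ D0 l := by
          simp only [D0, Finset.mem_filter, Finset.mem_range]
          rintro ⟨h3, -⟩; omega
        rw [e6, Finset.sum_empty] at hsplit
        rw [hmaj, ← hsplit, e7, Finset.sum_empty, if_neg e8]
        omega
  rw [step1, Finset.sum_add_distrib, Finset.sum_add_distrib, hA, hB, hC, hM]
  by_cases h0 : i = 0
  · subst h0; simp
  · by_cases h1 : i - 1 ∈ D0 l
    · rw [if_pos h1, if_pos (Or.inr h1 : i = 0 ∨ i - 1 ∈ D0 l), if_neg h0]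
      ring
    · rw [if_neg h1, if_neg h0, if_neg (show ¬ (i = 0 ∨ i - 1 ∈ D0 l) by tauto)]
      ring

lemma delta_key (n : ℕ) (D : Finset ℕ) :
    ∀ a b : ℕ, a < b → b < n →
      (if a = 0 ∨ a - 1 ∈ D then 0 else a) + (D.filter (fun j => a ≤ j)).card ≠
      (if b = 0 ∨ b - 1 ∈ D then 0 else b) + (D.filter (fun j => b ≤ j)).card := by
  intro a b hab hbn
  set k := D.card with hk
  have hle : ∀ i : ℕ, (D.filter (fun j => i ≤ j)).card ≤ k := fun i => Finset.card_filter_le _ _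
  have hbig : ∀ i : ℕ, 1 ≤ i → i - 1 ∉ D →
      k + 1 ≤ i + (D.filter (fun j => i ≤ j)).card := by
    intro i h1 h2
    have hpart := Finset.card_filter_add_card_filter_not (s := D)
      (p := fun j => i ≤ j)
    simp only [not_le] at hpart
    have hsub : D.filter (fun j => j < i) ⊆ Finset.range (i - 1) := by
      intro j hj
      rw [Finset.mem_filter] at hj
      rw [Finset.mem_range]
      rcases hj with ⟨hjD, hji⟩
      have : j ≠ i - 1 := fun h => h2 (h ▸ hjD)
      omega
    have hc := Finset.card_le_card hsub
    rw [Finset.card_range] at hc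
    omega
  by_cases ha : a = 0 ∨ a - 1 ∈ D <;> by_cases hb : b = 0 ∨ b - 1 ∈ D
  · rw [if_pos ha, if_pos hb]
    have hbD : b - 1 ∈ D := by rcases hb with h | h; omega; exact h
    have hss : D.filter (fun j => b ≤ j) ⊂ D.filter (fun j => a ≤ j) := by
      constructor
      · intro x hx
        simp only [Finset.mem_filter] at hx ⊢
        exact ⟨hx.1, by omega⟩
      · intro hcon
        have hmem : b - 1 ∈ D.filter (fun j => b ≤ j) := hcon (by
          rw [Finset.mem_filter]; exact ⟨hbD, by omega⟩)
        rw [Finset.mem_filter] at hmem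
        omega
    have := Finset.card_lt_card hss
    omega
  · rw [if_pos ha, if_neg hb]
    push_neg at hb
    have := hbig b (by omega) hb.2
    have := hle a
    omega
  · rw [if_neg ha, if_pos hb]
    push_neg at ha
    have := hbig a (by omega) ha.2
    have := hle b
    omega
  · rw [if_neg ha, if_neg hb]
    push_neg at ha; push_neg at hb
    have hpart := Finset.card_filter_add_card_filter_not
      (s := D.filter (fun j => a ≤ j)) (p := fun j => b ≤ j)
    simp only [not_le] at hpart
    have h1 : (D.filter (fun j => a ≤ j)).filter (fun j => b ≤ j)
        = D.filter (fun j => b ≤ j) := by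
      ext x
      simp only [Finset.mem_filter]
      constructor
      · rintro ⟨⟨h1, h2⟩, h3⟩; exact ⟨h1, h3⟩
      · rintro ⟨h1, h3⟩; exact ⟨⟨h1, by omega⟩, h3⟩
    have h2 : (D.filter (fun j => a ≤ j)).filter (fun j => j < b)
        ⊆ Finset.Ico a (b - 1) := by
      intro j hj
      simp only [Finset.mem_filter] at hj
      rw [Finset.mem_Ico]
      have : j ≠ b - 1 := fun h => hb.2 (h ▸ hj.1.1)
      omega
    have h3 := Finset.card_le_card h2
    rw [Nat.card_Ico] at h3
    rw [h1] at hpart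
    omega

lemma delta_lt (n : ℕ) (hn : 1 ≤ n) (D : Finset ℕ) (hD : ∀ j ∈ D, j < n - 2) :
    ∀ i : ℕ, i < n →
      (if i = 0 ∨ i - 1 ∈ D then 0 else i) + (D.filter (fun j => i ≤ j)).card < n := by
  intro i hi
  by_cases hcase : i = 0 ∨ i - 1 ∈ D
  · rw [if_pos hcase]
    have hsub : D.filter (fun j => i ≤ j) ⊆ Finset.range (n - 2) := by
      intro j hj
      rw [Finset.mem_filter] at hj
      rw [Finset.mem_range]
      exact hD j hj.1
    have := Finset.card_le_card hsub
    rw [Finset.card_range] at this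
    omega
  · rw [if_neg hcase]
    have hsub : D.filter (fun j => i ≤ j) ⊆ Finset.Ico i (n - 2) := by
      intro j hj
      rw [Finset.mem_filter] at hj
      rw [Finset.mem_Ico]
      exact ⟨hj.2, hD j hj.1⟩
    have := Finset.card_le_card hsub
    rw [Nat.card_Ico] at this
    omega


theorem maj_insert_one (n : ℕ) (hn : 1 ≤ n) (l : List ℕ)
    (hl : l.Perm (List.range' 2 (n - 1))) :
    Set.InjOn (fun i => majList (l.insertIdx i 1)) (Set.Iio n) ∧
    (Finset.range n).image (fun i => majList (l.insertIdx i 1)) =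
      (Finset.range n).image (fun j => majList l + j) := by
  have hlen : l.length = n - 1 := by
    have := hl.length_eq
    simpa using this
  have hent : ∀ j, j < l.length → 2 ≤ l.getD j 0 := by
    intro j hj
    rw [List.getD_eq_getElem _ _ hj]
    have hmem : l[j] ∈ l := List.getElem_mem _
    have := hl.mem_iff.1 hmem
    rw [List.mem_range'_1] at this
    exact this.1
  set Δ : ℕ → ℕ := fun i =>
    (if i = 0 ∨ i - 1 ∈ D0 l then 0 else i) + ((D0 l).filter (fun j => i ≤ j)).card with hΔ
  have hD : ∀ j ∈ D0 l, j < n - 2 := by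
    intro j hj
    simp only [D0, Finset.mem_filter, Finset.mem_range] at hj
    omega
  have key : ∀ i, i < n → majList (l.insertIdx i 1) = majList l + Δ i := by
    intro i hi
    exact maj_insert l hent i (by omega)
  have hkey := delta_key n (D0 l)
  have hinj : ∀ a, a < n → ∀ b, b < n →
      majList (l.insertIdx a 1) = majList (l.insertIdx b 1) → a = b := by
    intro a ha b hb h
    rw [key a ha, key b hb] at h
    have hΔab : Δ a = Δ b := by omega
    by_contra hne
    rcases (by omega : a < b ∨ b < a) with hlt | hlt
    · exact hkey a b hlt hb hΔab
    · exact hkey b a hlt ha hΔab.symm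
  constructor
  · intro a ha b hb h
    exact hinj a ha b hb h
  · have him : (Finset.range n).image Δ = Finset.range n := by
      apply Finset.eq_of_subset_of_card_le
      · intro x hx
        rw [Finset.mem_image] at hx
        obtain ⟨i, hi, rfl⟩ := hx
        rw [Finset.mem_range] at hi ⊢
        exact delta_lt n hn (D0 l) hD i hi
      · rw [Finset.card_image_of_injOn, Finset.card_range]
        intro a ha b hb h
        rw [Finset.coe_range, Set.mem_Iio] at ha hb
        by_contra hne
        rcases (by omega : a < b ∨ b < a) with hlt | hlt
        · exact hkey a b hlt hb h
        · exact hkey b a hlt ha h.symm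
    calc (Finset.range n).image (fun i => majList (l.insertIdx i 1))
        = (Finset.range n).image (fun i => majList l + Δ i) := by
          apply Finset.image_congr
          intro i hi
          rw [Finset.coe_range, Set.mem_Iio] at hi
          exact key i hi
      _ = ((Finset.range n).image Δ).image (fun j => majList l + j) :=
          (Finset.image_image).symm
      _ = (Finset.range n).image (fun j => majList l + j) := by rw [him]
end

section
/- For every n ≥ 1, the statistics inv and maj are equidistributed over the symmetric group S_n; that is, for every k, the number of permutations of [n] with exactly k inversions equals the number of permutations of [n] with major index k. -/
open Finset
open scoped Classical

/-- major index of a permutation of [n], via its word π(1)…π(n) -/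
def majPerm {n : ℕ} (π : Equiv.Perm (Fin n)) : ℕ := majList (List.ofFn (fun i => (π i : ℕ) + 1))

/-- inversion number of a permutation of [n] -/
def invPerm {n : ℕ} (π : Equiv.Perm (Fin n)) : ℕ := invList (List.ofFn (fun i => (π i : ℕ) + 1))

/-- the matching M_π of [2m] with arcs (m+1-π(i), i+m) for 1 ≤ i ≤ m -/
def Mpi (m : ℕ) (π : Equiv.Perm (Fin m)) : Finset (ℕ × ℕ) :=
  Finset.univ.image (fun i : Fin m => (m + 1 - ((π i : ℕ) + 1), ((i : ℕ) + 1) + m))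

/-- vertical displacement of the k-th step (k = 1,…,2n) of the lattice path L(S,T):
the two steps for vertex i are steps 2i-1 and 2i; the first step goes down unless i ∈ S,
the second goes up unless i ∈ T. -/
def stepDelta (S T : Finset ℕ) (k : ℕ) : ℤ :=
  if k % 2 = 1 then (if (k + 1) / 2 ∈ S then 0 else -1) else (if k / 2 ∈ T then 0 else 1)

/-- the height (y-coordinate) of the lattice path L(S,T) after k steps -/
def pathHt (S T : Finset ℕ) (k : ℕ) : ℤ := ∑ j ∈ Finset.Icc 1 k, stepDelta S T j

namespace IMEq

def ins (w : List ℕ) (p v : ℕ) : List ℕ := w.take p ++ v :: w.drop p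

lemma length_ins (w : List ℕ) (p v : ℕ) (hp : p ≤ w.length) :
    (ins w p v).length = w.length + 1 := by
  simp [ins]; omega

lemma getD_ins (w : List ℕ) (p v : ℕ) (hp : p ≤ w.length) (j : ℕ) :
    (ins w p v).getD j 0 =
      if j < p then w.getD j 0 else if j = p then v else w.getD (j-1) 0 := by
  simp only [ins, List.getD_eq_getElem?_getD, List.getElem?_append, List.length_take,
    List.getElem?_take, List.getElem?_cons, List.getElem?_drop]
  rcases lt_trichotomy j p with h|h|h
  · have : j < p ⊓ w.length := by omega
    simp [this, h]
  · subst h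
    have h1 : ¬ (j < j ⊓ w.length) := by omega
    have h2 : j - j ⊓ w.length = 0 := by omega
    simp [h1, h2]
  · have h1 : ¬ (j < p ⊓ w.length) := by omega
    have h2 : j - p ⊓ w.length ≠ 0 := by omega
    have h3 : ¬ (j < p) := by omega
    have h4 : j ≠ p := by omega
    have h5 : p + (j - p ⊓ w.length - 1) = j - 1 := by omega
    simp [h1, h2, h3, h4, h5]

def dA (w : List ℕ) (i : ℕ) : ℕ := if w.getD (i+1) 0 < w.getD i 0 then 1 else 0

lemma dA_le_one (w : List ℕ) (i : ℕ) : dA w i ≤ 1 := by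
  unfold dA; split <;> simp

lemma majList_eq (w : List ℕ) :
    majList w = ∑ i ∈ range (w.length - 1), (i+1) * dA w i := by
  unfold majList dA
  refine Finset.sum_congr rfl fun i _ => ?_
  split <;> simp

def R (w : List ℕ) (p : ℕ) : ℕ := ∑ j ∈ Finset.Ico p (w.length - 1), dA w j

def Dl (w : List ℕ) (p : ℕ) : ℕ :=
  (if p = w.length then 0 else if 0 < p ∧ dA w (p-1) = 1 then 1 else p + 1) + R w p

section
variable (w : List ℕ) (p v : ℕ)

lemma dA_ins_lt (hp : p ≤ w.length) (i : ℕ) (hi : i + 1 < p) :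
    dA (ins w p v) i = dA w i := by
  unfold dA
  rw [getD_ins w p v hp (i+1), getD_ins w p v hp i,
    if_pos (show i + 1 < p from hi), if_pos (show i < p by omega)]

lemma dA_ins_pred (hp : p ≤ w.length) (hv : ∀ j < w.length, w.getD j 0 < v)
    (m : ℕ) (hm : p = m + 1) :
    dA (ins w p v) m = 0 := by
  subst hm
  unfold dA
  rw [getD_ins w (m+1) v hp (m+1), getD_ins w (m+1) v hp m,
    if_neg (show ¬ (m + 1 < m + 1) by omega), if_pos (show m + 1 = m + 1 from rfl),
    if_pos (show m < m + 1 by omega),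
    if_neg (not_lt.2 (le_of_lt (hv m (by omega))))]

lemma dA_ins_self (hp : p < w.length) (hv : ∀ j < w.length, w.getD j 0 < v) :
    dA (ins w p v) p = 1 := by
  unfold dA
  rw [getD_ins w p v (le_of_lt hp) (p+1), getD_ins w p v (le_of_lt hp) p,
    if_neg (show ¬ (p + 1 < p) by omega), if_neg (show ¬ (p + 1 = p) by omega),
    if_neg (show ¬ (p < p) by omega), if_pos (show p = p from rfl),
    show p + 1 - 1 = p from rfl, if_pos (hv p hp)]

lemma dA_ins_gt (hp : p ≤ w.length) (i : ℕ) (hi : p < i) :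
    dA (ins w p v) i = dA w (i - 1) := by
  unfold dA
  rw [getD_ins w p v hp (i+1), getD_ins w p v hp i,
    if_neg (show ¬ (i + 1 < p) by omega), if_neg (show ¬ (i + 1 = p) by omega),
    if_neg (show ¬ (i < p) by omega), if_neg (show ¬ (i = p) by omega),
    show i + 1 - 1 = i - 1 + 1 by omega]

lemma maj_ins (hp : p ≤ w.length) (hv : ∀ j < w.length, w.getD j 0 < v) :
    majList (ins w p v) = majList w + Dl w p := by
  rw [majList_eq, majList_eq, length_ins w p v hp]
  simp only [Nat.add_sub_cancel]
  rcases eq_or_lt_of_le hp with hpe | hplt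
  · -- p = w.length
    unfold Dl R
    rw [if_pos hpe, Finset.Ico_eq_empty (by omega), Finset.sum_empty]
    simp only [zero_add, add_zero]
    rcases Nat.eq_zero_or_pos p with h0 | h0
    · have hl : w.length = 0 := by omega
      simp [h0, hl]
    · obtain ⟨m, hm⟩ : ∃ m, p = m + 1 := ⟨p - 1, by omega⟩
      have hl : w.length = m + 1 := by omega
      rw [hl, hm, Finset.sum_range_succ,
        dA_ins_pred w (m+1) v (hm ▸ hp) hv m rfl]
      simp only [Nat.add_sub_cancel, mul_zero, add_zero]
      exact Finset.sum_congr rfl fun i hi =>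
        by rw [dA_ins_lt w (m+1) v (hm ▸ hp) i (by rw [mem_range] at hi; omega)]
  · -- p < w.length
    have e1 : ∑ i ∈ range w.length, (i+1) * dA (ins w p v) i
        = (∑ i ∈ range p, (i+1) * dA (ins w p v) i)
          + ∑ i ∈ Finset.Ico p w.length, (i+1) * dA (ins w p v) i :=
      (Finset.sum_range_add_sum_Ico _ (le_of_lt hplt)).symm
    have e2 : ∑ i ∈ Finset.Ico p w.length, (i+1) * dA (ins w p v) i
        = (p+1) + ∑ i ∈ Finset.Ico (p+1) w.length, (i+1) * dA (ins w p v) i := by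
      rw [← Finset.sum_Ico_consecutive (fun i => (i+1) * dA (ins w p v) i)
        (show p ≤ p + 1 by omega) (show p + 1 ≤ w.length by omega)]
      congr 1
      rw [show Finset.Ico p (p+1) = {p} from by
          ext x; rw [Finset.mem_Ico, Finset.mem_singleton]; omega,
        Finset.sum_singleton, dA_ins_self w p v hplt hv, mul_one]
    have e3 : ∑ i ∈ Finset.Ico (p+1) w.length, (i+1) * dA (ins w p v) i
        = (∑ j ∈ Finset.Ico p (w.length - 1), (j+1) * dA w j)
          + ∑ j ∈ Finset.Ico p (w.length - 1), dA w j := by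
      rw [← Finset.sum_add_distrib, Finset.sum_Ico_eq_sum_range, Finset.sum_Ico_eq_sum_range,
        show w.length - (p+1) = w.length - 1 - p by omega]
      refine Finset.sum_congr rfl fun k hk => ?_
      rw [dA_ins_gt w p v hp (p+1+k) (by omega), show p + 1 + k - 1 = p + k by omega]
      ring
    have e5 : ∑ i ∈ range (w.length - 1), (i+1) * dA w i
        = (∑ i ∈ range p, (i+1) * dA w i) + ∑ i ∈ Finset.Ico p (w.length - 1), (i+1) * dA w i :=
      (Finset.sum_range_add_sum_Ico _ (show p ≤ w.length - 1 by omega)).symm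
    rw [e1, e2, e3, e5]
    unfold Dl R
    rw [if_neg (show ¬ p = w.length by omega)]
    rcases Nat.eq_zero_or_pos p with h0 | h0
    · subst h0
      simp only [Finset.sum_range_zero, zero_add, Nat.lt_irrefl, false_and, if_false]
      omega
    · obtain ⟨m, rfl⟩ : ∃ m, p = m + 1 := ⟨p - 1, by omega⟩
      rw [Finset.sum_range_succ, Finset.sum_range_succ,
        dA_ins_pred w (m+1) v hp hv m rfl]
      have e6 : ∑ i ∈ range m, (i+1) * dA (ins w (m+1) v) i = ∑ i ∈ range m, (i+1) * dA w i :=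
        Finset.sum_congr rfl fun i hi =>
          by rw [dA_ins_lt w (m+1) v hp i (by rw [mem_range] at hi; omega)]
      rw [e6]
      simp only [Nat.add_sub_cancel, mul_zero, add_zero]
      by_cases hd : dA w m = 1
      · rw [if_pos (⟨Nat.succ_pos m, hd⟩ : 0 < m + 1 ∧ dA w m = 1), hd]
        omega
      · have hd0 : dA w m = 0 := by have := dA_le_one w m; omega
        rw [if_neg (fun h : 0 < m + 1 ∧ dA w m = 1 => hd h.2), hd0]
        omega
end

def aP (w : List ℕ) (p : ℕ) : ℕ :=
  if p = w.length then 0 else if 0 < p ∧ dA w (p-1) = 1 then 1 else p + 1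

lemma Dl_eq (w : List ℕ) (p : ℕ) : Dl w p = aP w p + R w p := rfl

lemma aP_pos (w : List ℕ) (p : ℕ) (hp : p < w.length) : 1 ≤ aP w p := by
  unfold aP; rw [if_neg (by omega)]; split <;> omega

lemma aP_le (w : List ℕ) (p : ℕ) : aP w p ≤ p + 1 := by
  unfold aP; split_ifs <;> omega

lemma R_le (w : List ℕ) (p : ℕ) : R w p ≤ w.length - 1 - p := by
  unfold R
  calc ∑ j ∈ Finset.Ico p (w.length - 1), dA w j
      ≤ (Finset.Ico p (w.length - 1)).card • 1 :=
        Finset.sum_le_card_nsmul _ _ 1 (fun x _ => dA_le_one w x)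
    _ = w.length - 1 - p := by rw [Nat.card_Ico]; simp

lemma R_zero (w : List ℕ) (p : ℕ) (hp : w.length - 1 ≤ p) : R w p = 0 := by
  unfold R; rw [Finset.Ico_eq_empty (by omega), Finset.sum_empty]

lemma Dl_le (w : List ℕ) (p : ℕ) (hp : p ≤ w.length) : Dl w p ≤ w.length := by
  rw [Dl_eq]
  rcases eq_or_lt_of_le hp with he | hlt
  · have h1 : aP w p = 0 := by unfold aP; rw [if_pos he]
    have h2 := R_le w p
    omega
  · have h1 := aP_le w p
    have h2 := R_le w p
    omega

lemma Dl_last (w : List ℕ) : Dl w w.length = 0 := by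
  rw [Dl_eq, R_zero w _ (by omega)]
  unfold aP; rw [if_pos rfl]

lemma Dl_pos (w : List ℕ) (p : ℕ) (hp : p < w.length) : 1 ≤ Dl w p := by
  rw [Dl_eq]; have := aP_pos w p hp; omega

lemma Dl_ne (w : List ℕ) (p q : ℕ) (hpq : p < q) (hq : q ≤ w.length) :
    Dl w p ≠ Dl w q := by
  intro h
  rcases eq_or_lt_of_le hq with hqe | hqlt
  · rw [hqe, Dl_last] at h
    have := Dl_pos w p (by omega)
    omega
  · obtain ⟨r, rfl⟩ : ∃ r, q = r + 1 := ⟨q - 1, by omega⟩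
    have hs : R w p = (∑ j ∈ Finset.Ico p (r+1), dA w j) + R w (r+1) := by
      unfold R
      rw [Finset.sum_Ico_consecutive _ (le_of_lt hpq) (show r + 1 ≤ w.length - 1 by omega)]
    have hSsum : ∑ j ∈ Finset.Ico p (r+1), dA w j
        = (∑ j ∈ Finset.Ico p r, dA w j) + dA w r :=
      Finset.sum_Ico_succ_top (by omega) _
    have hS2 : ∑ j ∈ Finset.Ico p r, dA w j ≤ r - p := by
      calc ∑ j ∈ Finset.Ico p r, dA w j ≤ (Finset.Ico p r).card • 1 :=
            Finset.sum_le_card_nsmul _ _ 1 (fun x _ => dA_le_one w x)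
        _ = r - p := by rw [Nat.card_Ico]; simp
    rw [Dl_eq, Dl_eq, hs] at h
    have hap := aP_pos w p (by omega)
    have hapl := aP_le w p
    by_cases hd : dA w r = 1
    · have hAq : aP w (r+1) = 1 := by
        unfold aP
        rw [if_neg (by omega), if_pos ⟨by omega, by simpa using hd⟩]
      rw [hAq] at h
      omega
    · have hd0 : dA w r = 0 := by have := dA_le_one w r; omega
      have hAq : aP w (r+1) = r + 2 := by
        unfold aP
        rw [if_neg (by omega), if_neg (by simp [hd0])]
      rw [hAq] at h
      omega

lemma Dl_count (w : List ℕ) (P : ℕ → Prop) [DecidablePred P] :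
    ((range (w.length+1)).filter (fun p => P (Dl w p))).card
      = ((range (w.length+1)).filter P).card := by
  have hinj : ∀ p ∈ range (w.length+1), ∀ q ∈ range (w.length+1),
      Dl w p = Dl w q → p = q := by
    intro p hp q hq h
    rw [mem_range] at hp hq
    by_contra hne
    rcases lt_or_gt_of_ne hne with hlt | hgt
    · exact Dl_ne w p q hlt (by omega) h
    · exact Dl_ne w q p hgt (by omega) h.symm
  have himg : (range (w.length+1)).image (Dl w) = range (w.length+1) := by
    apply Finset.eq_of_subset_of_card_le
    · intro x hx
      rw [Finset.mem_image] at hx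
      obtain ⟨p, hp, rfl⟩ := hx
      rw [mem_range] at hp ⊢
      have := Dl_le w p (by omega)
      omega
    · rw [Finset.card_image_of_injOn (fun p hp q hq => hinj p hp q hq)]
  apply Finset.card_bij (fun p _ => Dl w p)
  · intro a ha
    rw [Finset.mem_filter] at ha ⊢
    rw [mem_range] at *
    exact ⟨by have := Dl_le w a (by omega : a ≤ w.length); omega, ha.2⟩
  · intro a ha b hb hab
    rw [Finset.mem_filter] at ha hb
    exact hinj a ha.1 b hb.1 hab
  · intro b hb
    rw [Finset.mem_filter] at hb
    have : b ∈ (range (w.length+1)).image (Dl w) := by rw [himg]; exact hb.1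
    rw [Finset.mem_image] at this
    obtain ⟨p, hp, rfl⟩ := this
    exact ⟨p, Finset.mem_filter.2 ⟨hp, hb.2⟩, rfl⟩

lemma inv_ins (w : List ℕ) (p v : ℕ) (hp : p ≤ w.length)
    (hv : ∀ j < w.length, w.getD j 0 < v) :
    invList (ins w p v) = invList w + (w.length - p) := by
  unfold invList
  rw [length_ins w p v hp]
  set u := ins w p v with hu
  set n := w.length with hn
  set T := ((range (n+1) ×ˢ range (n+1)).filter
    (fun q => q.1 < q.2 ∧ u.getD q.2 0 < u.getD q.1 0)) with hT
  have hgetD : ∀ j, u.getD j 0 = if j < p then w.getD j 0 else if j = p then v else w.getD (j-1) 0 :=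
    getD_ins w p v hp
  have hsplit := Finset.card_filter_add_card_filter_not
    (s := T) (p := fun q => q.1 = p ∨ q.2 = p)
  have h1 : T.filter (fun q => q.1 = p ∨ q.2 = p) = {p} ×ˢ Finset.Ico (p+1) (n+1) := by
    ext ⟨i, j⟩
    simp only [hT, Finset.mem_filter, Finset.mem_product, Finset.mem_range,
      Finset.mem_singleton, Finset.mem_Ico]
    constructor
    · rintro ⟨⟨⟨hi, hj⟩, hij, hinv⟩, hor⟩
      rcases hor with rfl | rfl
      · exact ⟨rfl, by omega, hj⟩
      · exfalso
        rw [hgetD j, hgetD i, if_neg (by omega), if_pos rfl, if_pos hij] at hinv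
        exact absurd (hv i (by omega)) (by omega)
    · rintro ⟨rfl, hj1, hj2⟩
      refine ⟨⟨⟨by omega, hj2⟩, by omega, ?_⟩, Or.inl rfl⟩
      rw [hgetD j, hgetD i, if_neg (by omega), if_pos rfl,
        if_neg (by omega), if_neg (by omega)]
      exact hv (j-1) (by omega)
  have hc1 : (T.filter (fun q => q.1 = p ∨ q.2 = p)).card = n - p := by
    rw [h1, Finset.card_product, Finset.card_singleton, Nat.card_Ico]
    omega
  have hc2 : (T.filter (fun q => ¬(q.1 = p ∨ q.2 = p))).card
      = ((range n ×ˢ range n).filter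
          (fun q => q.1 < q.2 ∧ w.getD q.2 0 < w.getD q.1 0)).card := by
    symm
    apply Finset.card_nbij' (i := fun q => (if q.1 < p then q.1 else q.1 + 1,
        if q.2 < p then q.2 else q.2 + 1))
      (j := fun q => (if q.1 < p then q.1 else q.1 - 1, if q.2 < p then q.2 else q.2 - 1))
    · rintro ⟨a, b⟩ ha
      simp only [Finset.mem_coe, Finset.mem_filter, Finset.mem_product, Finset.mem_range] at ha
      obtain ⟨⟨ha1, hb1⟩, hab, hinv⟩ := ha
      simp only [Finset.mem_coe, hT, Finset.mem_filter, Finset.mem_product, Finset.mem_range]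
      have hga : u.getD (if a < p then a else a + 1) 0 = w.getD a 0 := by
        rw [hgetD]
        split_ifs <;> first
          | rfl
          | omega
          | (congr 1; omega)
      have hgb : u.getD (if b < p then b else b + 1) 0 = w.getD b 0 := by
        rw [hgetD]
        split_ifs <;> first
          | rfl
          | omega
          | (congr 1; omega)
      refine ⟨⟨⟨by split_ifs <;> omega, by split_ifs <;> omega⟩,
        by split_ifs <;> omega, by rw [hga, hgb]; exact hinv⟩, ?_⟩
      push_neg
      constructor <;> (split_ifs <;> omega)
    · rintro ⟨a, b⟩ ha
      simp only [Finset.mem_coe, hT, Finset.mem_filter, Finset.mem_product, Finset.mem_range] at ha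
      obtain ⟨⟨⟨ha1, hb1⟩, hab, hinv⟩, hne⟩ := ha
      push_neg at hne
      obtain ⟨hna, hnb⟩ := hne
      simp only [Finset.mem_coe, Finset.mem_filter, Finset.mem_product, Finset.mem_range]
      have hga : w.getD (if a < p then a else a - 1) 0 = u.getD a 0 := by
        rw [hgetD]
        split_ifs <;> first
          | rfl
          | omega
          | (congr 1; omega)
      have hgb : w.getD (if b < p then b else b - 1) 0 = u.getD b 0 := by
        rw [hgetD]
        split_ifs <;> first
          | rfl
          | omega
          | (congr 1; omega)
      exact ⟨⟨by split_ifs <;> omega, by split_ifs <;> omega⟩,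
        by split_ifs <;> omega, by rw [hga, hgb]; exact hinv⟩
    · rintro ⟨a, b⟩ ha
      simp only [Finset.mem_coe, Finset.mem_filter, Finset.mem_product, Finset.mem_range] at ha
      have : ∀ x : ℕ, x < n →
          (if (if x < p then x else x + 1) < p then (if x < p then x else x + 1)
            else (if x < p then x else x + 1) - 1) = x := by
        intro x _; split_ifs <;> omega
      exact Prod.ext (this a (by omega)) (this b (by omega))
    · rintro ⟨a, b⟩ ha
      simp only [Finset.mem_coe, hT, Finset.mem_filter, Finset.mem_product, Finset.mem_range] at ha
      obtain ⟨⟨⟨ha1, hb1⟩, hab, _⟩, hne⟩ := ha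
      push_neg at hne
      have : ∀ x : ℕ, x ≠ p → x < n + 1 →
          (if (if x < p then x else x - 1) < p then (if x < p then x else x - 1)
            else (if x < p then x else x - 1) + 1) = x := by
        intro x hx _; split_ifs <;> omega
      exact Prod.ext (this a hne.1 (by omega)) (this b hne.2 (by omega))
  omega

def wrd {n : ℕ} (π : Equiv.Perm (Fin n)) : List ℕ := List.ofFn (fun i => (π i : ℕ) + 1)

lemma length_wrd {n : ℕ} (π : Equiv.Perm (Fin n)) : (wrd π).length = n := by
  simp [wrd]

lemma getD_wrd {n : ℕ} (π : Equiv.Perm (Fin n)) (j : ℕ) (hj : j < n) :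
    (wrd π).getD j 0 = (π ⟨j, hj⟩ : ℕ) + 1 := by
  simp [wrd, List.getD_eq_getElem?_getD, List.getElem?_ofFn, hj]

lemma wrd_lt {n : ℕ} (π : Equiv.Perm (Fin n)) (j : ℕ) (hj : j < (wrd π).length) :
    (wrd π).getD j 0 < n + 1 := by
  rw [length_wrd] at hj
  rw [getD_wrd π j hj]
  have := (π ⟨j, hj⟩).isLt
  omega

def E {n : ℕ} (p : Fin (n+1)) (σ : Equiv.Perm (Fin n)) : Equiv.Perm (Fin (n+1)) :=
  (finSuccEquiv' p).trans ((Equiv.optionCongr σ).trans (finSuccEquiv' (Fin.last n)).symm)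

lemma E_apply_self {n : ℕ} (p : Fin (n+1)) (σ : Equiv.Perm (Fin n)) : E p σ p = Fin.last n := by
  simp [E, finSuccEquiv'_at]

lemma E_apply_succAbove {n : ℕ} (p : Fin (n+1)) (σ : Equiv.Perm (Fin n)) (i : Fin n) :
    E p σ (p.succAbove i) = (σ i).castSucc := by
  simp [E, finSuccEquiv'_succAbove, finSuccEquiv'_symm_some, Fin.succAbove_last]

lemma wrd_E {n : ℕ} (p : Fin (n+1)) (σ : Equiv.Perm (Fin n)) :
    wrd (E p σ) = ins (wrd σ) (p : ℕ) (n + 1) := by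
  have hplen : (p : ℕ) ≤ (wrd σ).length := by rw [length_wrd]; omega
  apply List.ext_getElem
  · rw [length_ins _ _ _ hplen, length_wrd, length_wrd]
  · intro j h1 h2
    have hj : j < n + 1 := by rwa [length_wrd] at h1
    have hL : ∀ (l : List ℕ) (hl : j < l.length), l[j] = l.getD j 0 := by
      intro l hl
      rw [List.getD_eq_getElem?_getD, List.getElem?_eq_getElem hl]
      rfl
    rw [hL _ h1, hL _ h2, getD_wrd (E p σ) j hj, getD_ins _ _ _ hplen]
    rcases lt_trichotomy j (p : ℕ) with h | h | h
    · rw [if_pos h]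
      have hjn : j < n := by omega
      have hsa : p.succAbove ⟨j, hjn⟩ = ⟨j, hj⟩ := by
        rw [Fin.succAbove]
        rw [if_pos]
        · rfl
        · simpa [Fin.lt_def] using h
      rw [← hsa, E_apply_succAbove, getD_wrd σ j hjn]
      simp
    · rw [if_neg (by omega), if_pos h]
      have : (⟨j, hj⟩ : Fin (n+1)) = p := by apply Fin.ext; simp [h]
      rw [this, E_apply_self]
      simp
    · rw [if_neg (by omega), if_neg (by omega)]
      have hjn : j - 1 < n := by omega
      have hsa : p.succAbove ⟨j - 1, hjn⟩ = ⟨j, hj⟩ := by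
        rw [Fin.succAbove, if_neg]
        · apply Fin.ext; simp; omega
        · simp [Fin.lt_def]; omega
      rw [← hsa, E_apply_succAbove, getD_wrd σ (j-1) hjn]
      simp

lemma E_injective {n : ℕ} :
    Function.Injective (fun x : Fin (n+1) × Equiv.Perm (Fin n) => E x.1 x.2) := by
  rintro ⟨p, σ⟩ ⟨q, τ⟩ h
  simp only at h
  have hpq : p = q := by
    by_contra hne
    obtain ⟨i, hi⟩ := Fin.exists_succAbove_eq (show p ≠ q from hne)
    have h1 : E p σ p = Fin.last n := E_apply_self p σ
    have h2 : E q τ p = (τ i).castSucc := by rw [← hi, E_apply_succAbove]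
    rw [h] at h1
    rw [h1] at h2
    exact absurd h2.symm (Fin.castSucc_lt_last (τ i)).ne
  subst hpq
  have hστ : σ = τ := by
    apply Equiv.ext
    intro i
    have h1 := E_apply_succAbove p σ i
    have h2 := E_apply_succAbove p τ i
    rw [h] at h1
    exact Fin.castSucc_injective n (h1.symm.trans h2)
  rw [hστ]

lemma E_bijective {n : ℕ} :
    Function.Bijective (fun x : Fin (n+1) × Equiv.Perm (Fin n) => E x.1 x.2) := by
  rw [Fintype.bijective_iff_injective_and_card]
  refine ⟨E_injective, ?_⟩
  rw [Fintype.card_prod, Fintype.card_perm, Fintype.card_perm, Fintype.card_fin, Fintype.card_fin,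
    Nat.factorial_succ]

end IMEq

namespace IMEq

lemma card_filter_E {n : ℕ} (Q : Equiv.Perm (Fin (n+1)) → Prop) [DecidablePred Q] :
    ((Finset.univ : Finset (Equiv.Perm (Fin (n+1)))).filter Q).card
      = ((Finset.univ : Finset (Fin (n+1) × Equiv.Perm (Fin n))).filter
          (fun x => Q (E x.1 x.2))).card := by
  symm
  apply Finset.card_bij (fun x _ => E x.1 x.2)
  · intro a ha
    rw [Finset.mem_filter] at ha ⊢
    exact ⟨Finset.mem_univ _, ha.2⟩
  · intro a _ b _ hab
    exact E_injective hab
  · intro π hπ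
    obtain ⟨x, hx⟩ := E_bijective.surjective π
    refine ⟨x, ?_, hx⟩
    rw [Finset.mem_filter] at hπ ⊢
    refine ⟨Finset.mem_univ _, ?_⟩
    show Q (E x.1 x.2)
    rw [show E x.1 x.2 = π from hx]
    exact hπ.2

lemma card_filter_prod {α β : Type*} [Fintype α] [Fintype β] [DecidableEq β]
    (Rp : α × β → Prop) [DecidablePred Rp] :
    ((Finset.univ : Finset (α × β)).filter Rp).card
      = ∑ b : β, ((Finset.univ : Finset α).filter (fun a => Rp (a, b))).card := by
  rw [Finset.card_eq_sum_card_fiberwise (f := Prod.snd) (t := Finset.univ)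
    (fun x _ => Finset.mem_univ _)]
  refine Finset.sum_congr rfl fun b _ => ?_
  apply Finset.card_nbij' (i := fun x => x.1) (j := fun a => (a, b))
  · rintro ⟨a, b'⟩ hx
    simp only [Finset.mem_coe, Finset.mem_filter, Finset.mem_univ, true_and] at hx ⊢
    obtain ⟨h1, rfl⟩ := hx
    exact h1
  · intro a ha
    simp only [Finset.mem_coe, Finset.mem_filter, Finset.mem_univ, true_and] at ha
    exact Finset.mem_filter.2 ⟨Finset.mem_filter.2 ⟨Finset.mem_univ _, ha⟩, rfl⟩
  · rintro ⟨a, b'⟩ hx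
    simp only [Finset.mem_coe, Finset.mem_filter, Finset.mem_univ, true_and] at hx
    exact Prod.ext rfl hx.2.symm
  · intro a _
    rfl

lemma card_filter_fin (m : ℕ) (P : ℕ → Prop) [DecidablePred P] :
    ((Finset.univ : Finset (Fin m)).filter (fun p : Fin m => P (p : ℕ))).card
      = ((range m).filter P).card := by
  apply Finset.card_bij (i := fun (p : Fin m) _ => (p : ℕ))
  · intro a ha
    rw [Finset.mem_filter] at ha ⊢
    exact ⟨Finset.mem_range.2 a.isLt, ha.2⟩
  · intro a _ b _ h
    exact Fin.ext h
  · intro b hb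
    rw [Finset.mem_filter, Finset.mem_range] at hb
    exact ⟨⟨b, hb.1⟩, Finset.mem_filter.2 ⟨Finset.mem_univ _, hb.2⟩, rfl⟩

lemma card_refl (n k c : ℕ) :
    ((range (n+1)).filter (fun p => c + (n - p) = k)).card
      = ((range (n+1)).filter (fun j => c + j = k)).card := by
  apply Finset.card_nbij' (i := fun p => n - p) (j := fun j => n - j)
  · intro a ha
    simp only [Finset.mem_coe, Finset.mem_filter, Finset.mem_range] at ha ⊢
    refine ⟨by omega, ?_⟩
    have := ha.2
    omega
  · intro a ha
    simp only [Finset.mem_coe, Finset.mem_filter, Finset.mem_range] at ha ⊢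
    refine ⟨by omega, ?_⟩
    have := ha.2
    omega
  · intro a ha
    simp only [Finset.mem_coe, Finset.mem_filter, Finset.mem_range] at ha ⊢
    omega
  · intro a ha
    simp only [Finset.mem_coe, Finset.mem_filter, Finset.mem_range] at ha ⊢
    omega

lemma sum_count (n k : ℕ) (st : Equiv.Perm (Fin n) → ℕ) :
    (∑ σ : Equiv.Perm (Fin n), ((range (n+1)).filter (fun j => st σ + j = k)).card)
      = ∑ m ∈ range (k+1),
          if k ≤ m + n then
            ((Finset.univ : Finset (Equiv.Perm (Fin n))).filter (fun σ => st σ = m)).card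
          else 0 := by
  have h1 : ∀ σ : Equiv.Perm (Fin n),
      ((range (n+1)).filter (fun j => st σ + j = k)).card
        = if st σ ≤ k ∧ k ≤ st σ + n then 1 else 0 := by
    intro σ
    split_ifs with h
    · rw [show (range (n+1)).filter (fun j => st σ + j = k) = {k - st σ} from by
        ext j; rw [Finset.mem_filter, Finset.mem_range, Finset.mem_singleton]; omega]
      exact Finset.card_singleton _
    · rw [Finset.card_eq_zero.2 (by
        ext j
        simp only [Finset.mem_filter, Finset.mem_range, Finset.notMem_empty, iff_false, not_and]
        omega)]
  rw [Finset.sum_congr rfl (fun σ _ => h1 σ), ← Finset.card_filter]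
  rw [Finset.card_eq_sum_card_fiberwise (f := st) (t := range (k+1))
    (fun σ hσ => by rw [Finset.mem_coe, Finset.mem_filter] at hσ; rw [Finset.mem_coe, Finset.mem_range]; omega)]
  refine Finset.sum_congr rfl fun m hm => ?_
  rw [Finset.mem_range] at hm
  split_ifs with h
  · congr 1
    ext σ
    simp only [Finset.mem_filter, Finset.mem_univ, true_and]
    constructor
    · rintro ⟨_, h2⟩
      exact h2
    · intro h2
      omega
  · rw [Finset.card_eq_zero.2 (by
      ext σ
      simp only [Finset.mem_filter, Finset.mem_univ, true_and, Finset.notMem_empty, iff_false,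
        not_and]
      omega)]

lemma inv_E {n : ℕ} (p : Fin (n+1)) (σ : Equiv.Perm (Fin n)) :
    invPerm (E p σ) = invPerm σ + (n - (p : ℕ)) := by
  show invList (wrd (E p σ)) = invList (wrd σ) + (n - (p : ℕ))
  rw [wrd_E, inv_ins _ _ _ (by rw [length_wrd]; omega) (fun j hj => wrd_lt σ j hj), length_wrd]

lemma maj_E {n : ℕ} (p : Fin (n+1)) (σ : Equiv.Perm (Fin n)) :
    majPerm (E p σ) = majPerm σ + Dl (wrd σ) (p : ℕ) := by
  show majList (wrd (E p σ)) = majList (wrd σ) + Dl (wrd σ) (p : ℕ)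
  rw [wrd_E, maj_ins _ _ _ (by rw [length_wrd]; omega) (fun j hj => wrd_lt σ j hj)]

lemma step_inv (n k : ℕ) :
    ((Finset.univ : Finset (Equiv.Perm (Fin (n+1)))).filter (fun π => invPerm π = k)).card
      = ∑ σ : Equiv.Perm (Fin n), ((range (n+1)).filter (fun j => invPerm σ + j = k)).card := by
  rw [card_filter_E (fun π => invPerm π = k), card_filter_prod]
  refine Finset.sum_congr rfl fun σ _ => ?_
  have h1 : ((Finset.univ : Finset (Fin (n+1))).filter (fun p => invPerm (E p σ) = k))
      = (Finset.univ : Finset (Fin (n+1))).filter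
          (fun p : Fin (n+1) => invPerm σ + (n - (p : ℕ)) = k) := by
    ext p
    simp [inv_E]
  rw [h1, card_filter_fin (n+1) (fun t => invPerm σ + (n - t) = k), card_refl]

lemma step_maj (n k : ℕ) :
    ((Finset.univ : Finset (Equiv.Perm (Fin (n+1)))).filter (fun π => majPerm π = k)).card
      = ∑ σ : Equiv.Perm (Fin n), ((range (n+1)).filter (fun j => majPerm σ + j = k)).card := by
  rw [card_filter_E (fun π => majPerm π = k), card_filter_prod]
  refine Finset.sum_congr rfl fun σ _ => ?_
  have h1 : ((Finset.univ : Finset (Fin (n+1))).filter (fun p => majPerm (E p σ) = k))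
      = (Finset.univ : Finset (Fin (n+1))).filter
          (fun p : Fin (n+1) => majPerm σ + Dl (wrd σ) (p : ℕ) = k) := by
    ext p
    simp [maj_E]
  rw [h1, card_filter_fin (n+1) (fun t => majPerm σ + Dl (wrd σ) t = k)]
  have h2 := Dl_count (wrd σ) (fun t => majPerm σ + t = k)
  rw [length_wrd] at h2
  exact h2

lemma main (n k : ℕ) :
    ((Finset.univ : Finset (Equiv.Perm (Fin n))).filter (fun π => invPerm π = k)).card
      = ((Finset.univ : Finset (Equiv.Perm (Fin n))).filter (fun π => majPerm π = k)).card := by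
  induction n generalizing k with
  | zero =>
    have h1 : ∀ π : Equiv.Perm (Fin 0), invPerm π = 0 := fun π => by simp [invPerm, invList]
    have h2 : ∀ π : Equiv.Perm (Fin 0), majPerm π = 0 := fun π => by simp [majPerm, majList]
    have e : ((Finset.univ : Finset (Equiv.Perm (Fin 0))).filter (fun π => invPerm π = k))
        = ((Finset.univ : Finset (Equiv.Perm (Fin 0))).filter (fun π => majPerm π = k)) := by
      ext π
      simp only [Finset.mem_filter, h1 π, h2 π]
    rw [e]
  | succ n ih =>
    rw [step_inv, step_maj, sum_count, sum_count]
    refine Finset.sum_congr rfl fun m _ => ?_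
    split_ifs with h
    · rw [ih m]
    · rfl

end IMEq

theorem inv_maj_equidistributed (n : ℕ) (hn : 1 ≤ n) (k : ℕ) :
    ((Finset.univ : Finset (Equiv.Perm (Fin n))).filter (fun π => invPerm π = k)).card =
      ((Finset.univ : Finset (Equiv.Perm (Fin n))).filter (fun π => majPerm π = k)).card := by
  exact IMEq.main n k
end

section
/- Fix S, T ⊆ [n] with |S| = |T|. Then ∑_{P ∈ P_n(S,T)} y^{Cr₂(P)} = ∏_{i ∉ T} (1 + y + ⋯ + y^{h(i)-1}), where for i ∉ T, h(i) = |T ∩ {i+1,…,n}| − |S ∩ {i+1,…,n}|. -/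
open Finset
open scoped Classical

def isMatch (n : ℕ) (S T : Finset ℕ) (A : Finset (ℕ × ℕ)) : Prop :=
  (∀ e ∈ A, e.1 < e.2) ∧ A.image Prod.fst = Finset.Icc 1 n \ T ∧
  A.image Prod.snd = Finset.Icc 1 n \ S ∧
  A.card = (Finset.Icc 1 n \ T).card ∧ A.card = (Finset.Icc 1 n \ S).card

noncomputable def matchSet (n : ℕ) (S T : Finset ℕ) : Finset (Finset (ℕ × ℕ)) :=
  ((Finset.Icc 1 n ×ˢ Finset.Icc 1 n).powerset).filter (isMatch n S T)

lemma mem_matchSet {n : ℕ} {S T : Finset ℕ} {A : Finset (ℕ × ℕ)} :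
    A ∈ matchSet n S T ↔ A ⊆ Finset.Icc 1 n ×ˢ Finset.Icc 1 n ∧ isMatch n S T A := by
  simp [matchSet, Finset.mem_filter, Finset.mem_powerset]

lemma fst_injOn {n : ℕ} {S T : Finset ℕ} {A : Finset (ℕ × ℕ)} (hA : A ∈ matchSet n S T) :
    Set.InjOn Prod.fst (A : Set (ℕ × ℕ)) := by
  obtain ⟨-, ⟨-, h2, -, h4, -⟩⟩ := mem_matchSet.1 hA
  exact Finset.card_image_iff.1 (by rw [h2, ← h4])

lemma snd_injOn {n : ℕ} {S T : Finset ℕ} {A : Finset (ℕ × ℕ)} (hA : A ∈ matchSet n S T) :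
    Set.InjOn Prod.snd (A : Set (ℕ × ℕ)) := by
  obtain ⟨-, ⟨-, -, h3, -, h5⟩⟩ := mem_matchSet.1 hA
  exact Finset.card_image_iff.1 (by rw [h3, ← h5])

lemma card_filter_prod {α β : Type*} (s : Finset α) (t : Finset β) (p : α × β → Prop) [DecidablePred p] :
    ((s ×ˢ t).filter p).card = ∑ a ∈ s, (t.filter fun b => p (a, b)).card := by
  rw [Finset.card_filter, Finset.sum_product]
  exact Finset.sum_congr rfl fun a _ => (Finset.card_filter _ _).symm

lemma cr2_insert (A : Finset (ℕ × ℕ)) (a : ℕ × ℕ) (ha : a ∉ A) :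
    cr2 (insert a A) = cr2 A
      + (A.filter (fun e => a.1 < e.1 ∧ e.1 < a.2 ∧ a.2 < e.2)).card
      + (A.filter (fun e => e.1 < a.1 ∧ a.1 < e.2 ∧ e.2 < a.2)).card := by
  unfold cr2
  rw [card_filter_prod, card_filter_prod, Finset.sum_insert ha]
  have h1 : ((insert a A).filter fun b => a.1 < b.1 ∧ b.1 < a.2 ∧ a.2 < b.2)
      = A.filter (fun e => a.1 < e.1 ∧ e.1 < a.2 ∧ a.2 < e.2) := by
    rw [Finset.filter_insert, if_neg]; simp
  have h2 : ∀ e ∈ A, ((insert a A).filter fun b => e.1 < b.1 ∧ b.1 < e.2 ∧ e.2 < b.2).card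
      = (A.filter fun b => e.1 < b.1 ∧ b.1 < e.2 ∧ e.2 < b.2).card
        + (if e.1 < a.1 ∧ a.1 < e.2 ∧ e.2 < a.2 then 1 else 0) := by
    intro e he
    rw [Finset.filter_insert]
    split_ifs with h
    · rw [Finset.card_insert_of_notMem (fun hc => ha (Finset.mem_filter.1 hc).1)]
    · rw [add_zero]
  rw [h1, Finset.sum_congr rfl h2, Finset.sum_add_distrib, ← Finset.card_filter]
  ring

lemma sum_pow_rank {R : Type*} [CommRing R] (y : R) :
    ∀ (m : ℕ) (s : Finset ℕ), s.card = m →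
      ∑ x ∈ s, y ^ ((s.filter (· < x)).card) = ∑ k ∈ Finset.range m, y ^ k := by
  intro m
  induction m with
  | zero => intro s hs; rw [Finset.card_eq_zero.1 hs]; simp
  | succ m ih =>
    intro s hs
    have hne : s.Nonempty := Finset.card_pos.1 (by omega)
    set M := s.max' hne with hM
    have hMs : M ∈ s := s.max'_mem hne
    have hle : ∀ x ∈ s, x ≤ M := fun x hx => s.le_max' x hx
    have hcard : (s.erase M).card = m := by rw [Finset.card_erase_of_mem hMs, hs]; rfl
    rw [← Finset.sum_erase_add _ _ hMs]
    have h1 : (s.filter (· < M)) = s.erase M := by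
      ext x
      simp only [Finset.mem_filter, Finset.mem_erase]
      constructor
      · rintro ⟨hx, hlt⟩; exact ⟨Nat.ne_of_lt hlt, hx⟩
      · rintro ⟨hne', hx⟩; exact ⟨hx, lt_of_le_of_ne (hle x hx) hne'⟩
    have h2 : ∀ x ∈ s.erase M, (s.filter (· < x)).card = ((s.erase M).filter (· < x)).card := by
      intro x hx
      rw [Finset.filter_erase, Finset.erase_eq_of_notMem]
      simp only [Finset.mem_filter, not_and]
      intro _
      exact not_lt.2 (hle x (Finset.mem_of_mem_erase hx))
    rw [h1, hcard, Finset.sum_congr rfl (fun x hx => by rw [h2 x hx]),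
      ih (s.erase M) hcard, Finset.sum_range_succ]

lemma image_erase_of_injOn {α β : Type*} [DecidableEq α] [DecidableEq β] (f : α → β)
    (s : Finset α) (hinj : Set.InjOn f s) (a : α) (ha : a ∈ s) :
    (s.erase a).image f = (s.image f).erase (f a) := by
  ext b
  simp only [Finset.mem_image, Finset.mem_erase]
  constructor
  · rintro ⟨x, ⟨hxa, hxs⟩, rfl⟩
    exact ⟨fun h => hxa (hinj hxs ha h), x, hxs, rfl⟩
  · rintro ⟨hb, x, hxs, rfl⟩
    exact ⟨x, ⟨fun h => hb (by rw [h]), hxs⟩, rfl⟩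

lemma matchSum {R : Type*} [CommRing R] (y : R) (n : ℕ) :
    ∀ (m : ℕ) (S T : Finset ℕ), S ⊆ Finset.Icc 1 n → T ⊆ Finset.Icc 1 n →
      S.card = T.card → (Finset.Icc 1 n \ T).card = m →
      ∑ A ∈ matchSet n S T, y ^ cr2 A =
        ∏ i ∈ Finset.Icc 1 n \ T, ∑ j ∈ Finset.range (hST n S T i), y ^ j := by
  intro m
  induction m with
  | zero =>
    intro S T hS hT hcard hm
    have hT' : T = Finset.Icc 1 n := by
      apply Finset.Subset.antisymm hT
      intro x hx
      by_contra hxT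
      exact Finset.notMem_empty x (Finset.card_eq_zero.1 hm ▸ Finset.mem_sdiff.2 ⟨hx, hxT⟩)
    have hS' : S = Finset.Icc 1 n := by
      apply Finset.eq_of_subset_of_card_le hS
      rw [hcard, hT']
    subst hT' hS'
    have hms : matchSet n (Finset.Icc 1 n) (Finset.Icc 1 n) = {∅} := by
      ext A
      simp only [Finset.mem_singleton, mem_matchSet, isMatch]
      constructor
      · rintro ⟨-, -, h2, -, -, -⟩
        rw [Finset.sdiff_self] at h2
        exact Finset.image_eq_empty.1 h2
      · rintro rfl
        simp
    rw [hms, Finset.card_eq_zero.1 hm]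
    simp [cr2]
  | succ m ih =>
    intro S T hS hT hcard hm
    set L := Finset.Icc 1 n \ T with hLdef
    have hLne : L.Nonempty := Finset.card_pos.1 (by omega)
    have hm' : (Finset.Icc 1 n \ T).card = m + 1 := hm
    set i₀ := L.max' hLne with hi₀def
    have hi₀L : i₀ ∈ L := L.max'_mem hLne
    have hi₀Icc : i₀ ∈ Finset.Icc 1 n := (Finset.mem_sdiff.1 hi₀L).1
    have hi₀T : i₀ ∉ T := (Finset.mem_sdiff.1 hi₀L).2
    have hi₀n : i₀ ≤ n := (Finset.mem_Icc.1 hi₀Icc).2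
    have hi₀1 : 1 ≤ i₀ := (Finset.mem_Icc.1 hi₀Icc).1
    have hle : ∀ x ∈ L, x ≤ i₀ := fun x hx => L.le_max' x hx
    set Ravail := (Finset.Icc 1 n \ S).filter (fun j => i₀ < j) with hRdef
    set g : Finset (ℕ × ℕ) → ℕ := fun A => (A.filter (fun e => e.1 = i₀)).sup Prod.snd with hgdef
    -- each matching has a unique arc at i₀
    have key : ∀ A ∈ matchSet n S T,
        (i₀, g A) ∈ A ∧ g A ∈ Ravail ∧ A.filter (fun e => e.1 = i₀) = {(i₀, g A)} := by
      intro A hA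
      obtain ⟨hgrid, hinc, hfst, hsnd, hc1, hc2⟩ := mem_matchSet.1 hA
      have : i₀ ∈ A.image Prod.fst := by rw [hfst]; exact hi₀L
      obtain ⟨e, heA, he1⟩ := Finset.mem_image.1 this
      have hfil : A.filter (fun f => f.1 = i₀) = {e} := by
        ext f
        simp only [Finset.mem_filter, Finset.mem_singleton]
        constructor
        · rintro ⟨hfA, hf1⟩
          exact fst_injOn hA hfA heA (by rw [hf1, he1])
        · rintro rfl; exact ⟨heA, he1⟩
      have hg : g A = e.2 := by rw [hgdef]; simp only; rw [hfil, Finset.sup_singleton]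
      have he : e = (i₀, g A) := by rw [hg, ← he1]
      refine ⟨he ▸ heA, ?_, he ▸ hfil⟩
      rw [hRdef]
      refine Finset.mem_filter.2 ⟨?_, ?_⟩
      · rw [← hsnd]; exact Finset.mem_image.2 ⟨e, heA, by rw [hg]⟩
      · have := hinc e heA; rw [he1] at this; rw [hg]; exact this
    have hmaps : ∀ A ∈ matchSet n S T, g A ∈ Ravail := fun A hA => (key A hA).2.1
    rw [← Finset.sum_fiberwise_of_maps_to hmaps]
    -- sets bookkeeping
    have hL1 : Finset.Icc 1 n \ insert i₀ T = L.erase i₀ := by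
      rw [hLdef, Finset.sdiff_insert]
    have hcards : (Finset.Icc 1 n \ S).card = m + 1 := by
      have h1 : (Finset.Icc 1 n \ S).card = n + 1 - 1 - S.card := by
        rw [Finset.card_sdiff_of_subset hS, Nat.card_Icc]
      have h2 : (Finset.Icc 1 n \ T).card = n + 1 - 1 - T.card := by
        rw [Finset.card_sdiff_of_subset hT, Nat.card_Icc]
      omega
    -- inner sums
    have inner : ∀ j ∈ Ravail,
        ∑ A ∈ (matchSet n S T).filter (fun A => g A = j), y ^ cr2 A =
          y ^ ((Ravail.filter (· < j)).card) *
            ∑ A' ∈ matchSet n (insert j S) (insert i₀ T), y ^ cr2 A' := by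
      intro j hj
      obtain ⟨hjS', hij⟩ := Finset.mem_filter.1 hj
      have hjIcc : j ∈ Finset.Icc 1 n := (Finset.mem_sdiff.1 hjS').1
      have hjS : j ∉ S := (Finset.mem_sdiff.1 hjS').2
      have hR1 : Finset.Icc 1 n \ insert j S = (Finset.Icc 1 n \ S).erase j := by
        rw [Finset.sdiff_insert]
      set e₀ : ℕ × ℕ := (i₀, j) with he₀def
      -- forward/backward membership
      have hforward : ∀ A ∈ (matchSet n S T).filter (fun A => g A = j),
          e₀ ∈ A ∧ A.erase e₀ ∈ matchSet n (insert j S) (insert i₀ T) := by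
        intro A hA'
        obtain ⟨hA, hgA⟩ := Finset.mem_filter.1 hA'
        obtain ⟨he₀A, -, hfil⟩ := key A hA
        rw [hgA] at he₀A
        obtain ⟨hgrid, hinc, hfst, hsnd, hc1, hc2⟩ := mem_matchSet.1 hA
        refine ⟨he₀A, mem_matchSet.2 ⟨(Finset.erase_subset _ _).trans hgrid, ?_, ?_, ?_, ?_, ?_⟩⟩
        · exact fun e he => hinc e (Finset.mem_of_mem_erase he)
        · rw [image_erase_of_injOn Prod.fst A (fst_injOn hA) e₀ he₀A, hfst, hL1]
        · rw [image_erase_of_injOn Prod.snd A (snd_injOn hA) e₀ he₀A, hsnd, hR1]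
        · rw [Finset.card_erase_of_mem he₀A, hL1, Finset.card_erase_of_mem hi₀L, hc1]
        · rw [Finset.card_erase_of_mem he₀A, hR1,
            Finset.card_erase_of_mem hjS', hc2]
      have hbackward : ∀ A' ∈ matchSet n (insert j S) (insert i₀ T),
          e₀ ∉ A' ∧ insert e₀ A' ∈ (matchSet n S T).filter (fun A => g A = j) := by
        intro A' hA'
        obtain ⟨hgrid, hinc, hfst, hsnd, hc1, hc2⟩ := mem_matchSet.1 hA'
        have he₀A' : e₀ ∉ A' := by
          intro hmem
          have : i₀ ∈ A'.image Prod.fst := Finset.mem_image.2 ⟨e₀, hmem, rfl⟩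
          rw [hfst, hL1] at this
          exact (Finset.mem_erase.1 this).1 rfl
        have hfilA' : A'.filter (fun e => e.1 = i₀) = ∅ := by
          rw [Finset.filter_eq_empty_iff]
          intro e he hcon
          have : i₀ ∈ A'.image Prod.fst := Finset.mem_image.2 ⟨e, he, hcon⟩
          rw [hfst, hL1] at this
          exact (Finset.mem_erase.1 this).1 rfl
        refine ⟨he₀A', Finset.mem_filter.2 ⟨mem_matchSet.2 ⟨?_, ?_, ?_, ?_, ?_, ?_⟩, ?_⟩⟩
        · intro e he
          rcases Finset.mem_insert.1 he with rfl | he'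
          · exact Finset.mem_product.2 ⟨hi₀Icc, hjIcc⟩
          · exact hgrid he'
        · intro e he
          rcases Finset.mem_insert.1 he with rfl | he'
          · exact hij
          · exact hinc e he'
        · rw [Finset.image_insert, hfst, hL1]
          exact Finset.insert_erase hi₀L
        · rw [Finset.image_insert, hsnd, hR1]
          exact Finset.insert_erase hjS'
        · rw [Finset.card_insert_of_notMem he₀A', hc1, hL1,
            Finset.card_erase_of_mem hi₀L]
          omega
        · rw [Finset.card_insert_of_notMem he₀A', hc2, hR1,
            Finset.card_erase_of_mem hjS']
          omega
        · show (Finset.filter (fun e => e.1 = i₀) (insert e₀ A')).sup Prod.snd = j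
          rw [Finset.filter_insert, if_pos rfl, hfilA']
          simp [he₀def]
      -- cr2 for insert
      have hcr2 : ∀ A' ∈ matchSet n (insert j S) (insert i₀ T),
          cr2 (insert e₀ A') = cr2 A' + (Ravail.filter (· < j)).card := by
        intro A' hA'
        obtain ⟨hgrid, hinc, hfst, hsnd, hc1, hc2⟩ := mem_matchSet.1 hA'
        have he₀A' : e₀ ∉ A' := (hbackward A' hA').1
        have hlt : ∀ e ∈ A', e.1 < i₀ := by
          intro e he
          have : e.1 ∈ A'.image Prod.fst := Finset.mem_image.2 ⟨e, he, rfl⟩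
          rw [hfst, hL1] at this
          obtain ⟨hne, hmem⟩ := Finset.mem_erase.1 this
          exact lt_of_le_of_ne (hle _ hmem) hne
        rw [cr2_insert A' e₀ he₀A']
        have h1 : A'.filter (fun e => e₀.1 < e.1 ∧ e.1 < e₀.2 ∧ e₀.2 < e.2) = ∅ := by
          rw [Finset.filter_eq_empty_iff]
          intro e he hcon
          exact absurd hcon.1 (not_lt.2 (le_of_lt (hlt e he)))
        have h2 : A'.filter (fun e => e.1 < e₀.1 ∧ e₀.1 < e.2 ∧ e.2 < e₀.2)
            = A'.filter (fun e => i₀ < e.2 ∧ e.2 < j) := by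
          apply Finset.filter_congr
          intro e he
          simp only [he₀def]
          exact ⟨fun h => ⟨h.2.1, h.2.2⟩, fun h => ⟨hlt e he, h.1, h.2⟩⟩
        have h3 : (A'.filter (fun e => i₀ < e.2 ∧ e.2 < j)).card
            = ((A'.image Prod.snd).filter (fun b => i₀ < b ∧ b < j)).card := by
          rw [Finset.filter_image]
          exact (Finset.card_image_of_injOn ((snd_injOn hA').mono
            (fun x hx => Finset.mem_coe.2 (Finset.mem_filter.1 (Finset.mem_coe.1 hx)).1))).symm
        have h4 : (A'.image Prod.snd).filter (fun b => i₀ < b ∧ b < j)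
            = Ravail.filter (· < j) := by
          rw [hsnd, hR1, hRdef]
          ext b
          simp only [Finset.mem_filter, Finset.mem_erase, Finset.mem_sdiff]
          constructor
          · rintro ⟨⟨hbj, hb⟩, h5, h6⟩
            exact ⟨⟨hb, h5⟩, h6⟩
          · rintro ⟨⟨hb, h5⟩, h6⟩
            exact ⟨⟨by omega, hb⟩, h5, h6⟩
        rw [h1, h2, h3, h4]
        simp
      -- the fiber bijection
      rw [Finset.mul_sum]
      refine Finset.sum_nbij' (fun A => A.erase e₀) (fun A' => insert e₀ A') ?_ ?_ ?_ ?_ ?_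
      · intro A hA
        exact (hforward A hA).2
      · intro A' hA'
        exact (hbackward A' hA').2
      · intro A hA
        exact Finset.insert_erase (hforward A hA).1
      · intro A' hA'
        exact Finset.erase_insert (hbackward A' hA').1
      · intro A hA
        have h1 := (hforward A hA).1
        have h2 := (hforward A hA).2
        conv_lhs => rw [← Finset.insert_erase h1]
        rw [hcr2 _ h2, pow_add, mul_comm]
    rw [Finset.sum_congr rfl inner]
    -- IH for the inner sums
    have hIH : ∀ j ∈ Ravail,
        ∑ A' ∈ matchSet n (insert j S) (insert i₀ T), y ^ cr2 A' =
          ∏ i ∈ L.erase i₀, ∑ k ∈ Finset.range (hST n S T i), y ^ k := by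
      intro j hj
      obtain ⟨hjS', hij⟩ := Finset.mem_filter.1 hj
      have hjIcc : j ∈ Finset.Icc 1 n := (Finset.mem_sdiff.1 hjS').1
      have hjS : j ∉ S := (Finset.mem_sdiff.1 hjS').2
      have hjn : j ≤ n := (Finset.mem_Icc.1 hjIcc).2
      rw [ih (insert j S) (insert i₀ T) (Finset.insert_subset hjIcc hS)
        (Finset.insert_subset hi₀Icc hT)
        (by rw [Finset.card_insert_of_notMem hjS, Finset.card_insert_of_notMem hi₀T, hcard])
        (by rw [hL1, Finset.card_erase_of_mem hi₀L]; omega)]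
      rw [hL1]
      apply Finset.prod_congr rfl
      intro i hi
      obtain ⟨hine, hiL⟩ := Finset.mem_erase.1 hi
      have hii₀ : i < i₀ := lt_of_le_of_ne (hle i hiL) hine
      have hi₀mem : i₀ ∈ Finset.Icc (i+1) n := Finset.mem_Icc.2 ⟨by omega, hi₀n⟩
      have hjmem : j ∈ Finset.Icc (i+1) n := Finset.mem_Icc.2 ⟨by omega, hjn⟩
      have e1 : insert i₀ T ∩ Finset.Icc (i+1) n = insert i₀ (T ∩ Finset.Icc (i+1) n) :=
        Finset.insert_inter_of_mem hi₀mem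
      have e2 : insert j S ∩ Finset.Icc (i+1) n = insert j (S ∩ Finset.Icc (i+1) n) :=
        Finset.insert_inter_of_mem hjmem
      have : hST n (insert j S) (insert i₀ T) i = hST n S T i := by
        unfold hST
        rw [e1, e2, Finset.card_insert_of_notMem (fun h => hi₀T (Finset.mem_inter.1 h).1),
          Finset.card_insert_of_notMem (fun h => hjS (Finset.mem_inter.1 h).1),
          Nat.succ_sub_succ]
      rw [this]
    rw [Finset.sum_congr rfl (fun j hj => by rw [hIH j hj]), ← Finset.sum_mul]
    have hRav : Ravail = Finset.Icc (i₀+1) n \ S := by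
      ext b
      simp only [hRdef, Finset.mem_filter, Finset.mem_sdiff, Finset.mem_Icc]
      constructor
      · rintro ⟨⟨⟨h1b, hbn⟩, hbS⟩, hib⟩
        exact ⟨⟨by omega, hbn⟩, hbS⟩
      · rintro ⟨⟨h1b, hbn⟩, hbS⟩
        exact ⟨⟨⟨by omega, hbn⟩, hbS⟩, by omega⟩
    have hTint : T ∩ Finset.Icc (i₀+1) n = Finset.Icc (i₀+1) n := by
      apply Finset.inter_eq_right.2
      intro b hb
      obtain ⟨hb1, hb2⟩ := Finset.mem_Icc.1 hb
      by_contra hbT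
      have hbL : b ∈ L := by
        rw [hLdef]
        exact Finset.mem_sdiff.2 ⟨Finset.mem_Icc.2 ⟨by omega, hb2⟩, hbT⟩
      exact absurd (hle b hbL) (by omega)
    have hcount : Ravail.card = hST n S T i₀ := by
      unfold hST
      rw [hTint, hRav]
      have h5 := Finset.card_inter_add_card_sdiff (Finset.Icc (i₀+1) n) S
      rw [Finset.inter_comm]
      omega
    rw [sum_pow_rank y Ravail.card Ravail rfl, hcount,
      ← Finset.mul_prod_erase _ _ hi₀L]


section PartA

variable {n : ℕ}

lemma mem_arcsOf {P : Finpartition (Finset.Icc 1 n)} {i j : ℕ} :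
    (i, j) ∈ arcsOf P ↔ i ∈ Finset.Icc 1 n ∧ j ∈ Finset.Icc 1 n ∧ i < j ∧
      ∃ B ∈ P.parts, i ∈ B ∧ j ∈ B ∧ ∀ k ∈ B, i < k → k < j → False := by
  simp only [arcsOf, Finset.mem_filter, Finset.mem_product]
  tauto

lemma arcs_grid {P : Finpartition (Finset.Icc 1 n)} :
    arcsOf P ⊆ Finset.Icc 1 n ×ˢ Finset.Icc 1 n := Finset.filter_subset _ _

lemma arcs_increase {P : Finpartition (Finset.Icc 1 n)} : ∀ e ∈ arcsOf P, e.1 < e.2 := by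
  intro e he
  exact (Finset.mem_filter.1 he).2.1

lemma arcs_fst_unique {P : Finpartition (Finset.Icc 1 n)} {i j j' : ℕ}
    (h1 : (i, j) ∈ arcsOf P) (h2 : (i, j') ∈ arcsOf P) : j = j' := by
  obtain ⟨-, hj, hij, B, hB, hiB, hjB, hbet⟩ := mem_arcsOf.1 h1
  obtain ⟨-, hj', hij', B', hB', hiB', hjB', hbet'⟩ := mem_arcsOf.1 h2
  have hBB : B = B' := P.eq_of_mem_parts hB hB' hiB hiB'
  subst hBB
  rcases lt_trichotomy j j' with h | h | h
  · exact (hbet' j hjB hij h).elim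
  · exact h
  · exact (hbet j' hjB' hij' h).elim

lemma arcs_snd_unique {P : Finpartition (Finset.Icc 1 n)} {i i' j : ℕ}
    (h1 : (i, j) ∈ arcsOf P) (h2 : (i', j) ∈ arcsOf P) : i = i' := by
  obtain ⟨hi, -, hij, B, hB, hiB, hjB, hbet⟩ := mem_arcsOf.1 h1
  obtain ⟨hi', -, hij', B', hB', hiB', hjB', hbet'⟩ := mem_arcsOf.1 h2
  have hBB : B = B' := P.eq_of_mem_parts hB hB' hjB hjB'
  subst hBB
  rcases lt_trichotomy i i' with h | h | h
  · exact (hbet i' hiB' h hij').elim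
  · exact h
  · exact (hbet' i hiB h hij).elim

lemma image_fst_arcsOf (P : Finpartition (Finset.Icc 1 n)) :
    (arcsOf P).image Prod.fst = Finset.Icc 1 n \ maxsetOf P := by
  ext x
  simp only [Finset.mem_image, Finset.mem_sdiff]
  constructor
  · rintro ⟨e, he, rfl⟩
    have he' : (e.1, e.2) ∈ arcsOf P := he
    obtain ⟨hx, hy, hlt, B, hB, hxB, hyB, -⟩ := mem_arcsOf.1 he'
    refine ⟨hx, fun hmax => ?_⟩
    obtain ⟨-, B', hB', hxB', hall⟩ := Finset.mem_filter.1 hmax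
    have : B' = B := P.eq_of_mem_parts hB' hB hxB' hxB
    subst this
    exact absurd (hall e.2 hyB) (by omega)
  · rintro ⟨hx, hnmax⟩
    obtain ⟨B, hB, hxB⟩ := P.exists_mem hx
    have hex : ∃ yy ∈ B, x < yy := by
      by_contra hcon
      push_neg at hcon
      exact hnmax (Finset.mem_filter.2 ⟨hx, B, hB, hxB, hcon⟩)
    obtain ⟨y0, hy0B, hy0⟩ := hex
    have hFne : (B.filter (fun k' => x < k')).Nonempty :=
      ⟨y0, Finset.mem_filter.2 ⟨hy0B, hy0⟩⟩
    obtain ⟨hjvB, hxjv⟩ :=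
      Finset.mem_filter.1 ((B.filter (fun k' => x < k')).min'_mem hFne)
    refine ⟨(x, (B.filter (fun k' => x < k')).min' hFne),
      mem_arcsOf.2 ⟨hx, P.le hB hjvB, hxjv, B, hB, hxB, hjvB, ?_⟩, rfl⟩
    intro k hkB hxk hkjv
    have : (B.filter (fun k' => x < k')).min' hFne ≤ k :=
      Finset.min'_le _ k (Finset.mem_filter.2 ⟨hkB, hxk⟩)
    omega

lemma image_snd_arcsOf (P : Finpartition (Finset.Icc 1 n)) :
    (arcsOf P).image Prod.snd = Finset.Icc 1 n \ minsetOf P := by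
  ext x
  simp only [Finset.mem_image, Finset.mem_sdiff]
  constructor
  · rintro ⟨e, he, rfl⟩
    have he' : (e.1, e.2) ∈ arcsOf P := he
    obtain ⟨hy, hx, hlt, B, hB, hyB, hxB, -⟩ := mem_arcsOf.1 he'
    refine ⟨hx, fun hmin => ?_⟩
    obtain ⟨-, B', hB', hxB', hall⟩ := Finset.mem_filter.1 hmin
    have : B' = B := P.eq_of_mem_parts hB' hB hxB' hxB
    subst this
    exact absurd (hall e.1 hyB) (by omega)
  · rintro ⟨hx, hnmin⟩
    obtain ⟨B, hB, hxB⟩ := P.exists_mem hx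
    have hex : ∃ yy ∈ B, yy < x := by
      by_contra hcon
      push_neg at hcon
      exact hnmin (Finset.mem_filter.2 ⟨hx, B, hB, hxB, fun j hj => hcon j hj⟩)
    obtain ⟨y0, hy0B, hy0⟩ := hex
    have hFne : (B.filter (fun k' => k' < x)).Nonempty :=
      ⟨y0, Finset.mem_filter.2 ⟨hy0B, hy0⟩⟩
    obtain ⟨hivB, hivx⟩ :=
      Finset.mem_filter.1 ((B.filter (fun k' => k' < x)).max'_mem hFne)
    refine ⟨((B.filter (fun k' => k' < x)).max' hFne, x),
      mem_arcsOf.2 ⟨P.le hB hivB, hx, hivx, B, hB, hivB, hxB, ?_⟩, rfl⟩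
    intro k hkB hivk hkx
    have hkmem : k ∈ B.filter (fun k' => k' < x) := Finset.mem_filter.2 ⟨hkB, hkx⟩
    have : k ≤ (B.filter (fun k' => k' < x)).max' hFne := Finset.le_max' _ k hkmem
    omega

lemma arcsOf_mem_matchSet {S T : Finset ℕ} {P : Finpartition (Finset.Icc 1 n)}
    (hP : P ∈ pnST n S T) : arcsOf P ∈ matchSet n S T := by
  obtain ⟨-, hmin, hmax⟩ := Finset.mem_filter.1 hP
  have hfi : Set.InjOn Prod.fst ((arcsOf P : Set (ℕ × ℕ))) := by
    intro e he f hf h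
    have he' : (e.1, e.2) ∈ arcsOf P := Finset.mem_coe.1 he
    have hf' : (f.1, f.2) ∈ arcsOf P := Finset.mem_coe.1 hf
    rw [← h] at hf'
    exact Prod.ext h (arcs_fst_unique he' hf')
  have hsi : Set.InjOn Prod.snd ((arcsOf P : Set (ℕ × ℕ))) := by
    intro e he f hf h
    have he' : (e.1, e.2) ∈ arcsOf P := Finset.mem_coe.1 he
    have hf' : (f.1, f.2) ∈ arcsOf P := Finset.mem_coe.1 hf
    rw [← h] at hf'
    exact Prod.ext (arcs_snd_unique he' hf') h
  refine mem_matchSet.2 ⟨arcs_grid, arcs_increase, ?_, ?_, ?_, ?_⟩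
  · rw [image_fst_arcsOf, hmax]
  · rw [image_snd_arcsOf, hmin]
  · rw [← Finset.card_image_of_injOn hfi, image_fst_arcsOf, hmax]
  · rw [← Finset.card_image_of_injOn hsi, image_snd_arcsOf, hmin]

/-! ### reconstruction of a partition from an arc set -/

def relA (A : Finset (ℕ × ℕ)) (a b : ℕ) : Prop := (a, b) ∈ A ∨ (b, a) ∈ A

def connA (A : Finset (ℕ × ℕ)) : ℕ → ℕ → Prop := Relation.ReflTransGen (relA A)

def upA (A : Finset (ℕ × ℕ)) : ℕ → ℕ → Prop :=
  Relation.ReflTransGen (fun a b => (a, b) ∈ A)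

lemma connA_symm {A : Finset (ℕ × ℕ)} : Symmetric (connA A) :=
  by haveI : Std.Symm (relA A) := ⟨fun _ _ h => h.elim Or.inr Or.inl⟩
     exact fun a b h => Std.Symm.symm (r := Relation.ReflTransGen (relA A)) a b h

lemma upA_le {A : Finset (ℕ × ℕ)} (hinc : ∀ e ∈ A, e.1 < e.2) {a b : ℕ}
    (h : upA A a b) : a ≤ b := by
  induction h with
  | refl => exact le_refl a
  | tail h₁ h₂ ih => exact le_of_lt (lt_of_le_of_lt ih (hinc _ h₂))

lemma upA_connA {A : Finset (ℕ × ℕ)} {a b : ℕ} (h : upA A a b) : connA A a b :=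
  Relation.ReflTransGen.mono (p := relA A) (by intro x y h'; exact Or.inl h') a b h

lemma connA_iff {A : Finset (ℕ × ℕ)}
    (hfi : ∀ e ∈ A, ∀ f ∈ A, e.1 = f.1 → e = f)
    (hsi : ∀ e ∈ A, ∀ f ∈ A, e.2 = f.2 → e = f) {a b : ℕ} :
    connA A a b ↔ upA A a b ∨ upA A b a := by
  constructor
  · intro h
    induction h with
    | refl => exact Or.inl Relation.ReflTransGen.refl
    | @tail b c h₁ h₂ ih =>
      rcases h₂ with hbc | hcb
      · rcases ih with hab | hba
        · exact Or.inl (hab.tail hbc)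
        · rcases Relation.ReflTransGen.cases_head hba with heq | ⟨d, hbd, hda⟩
          · exact Or.inl (heq ▸ Relation.ReflTransGen.single hbc)
          · have hdc : d = c := congrArg Prod.snd (hfi _ hbd _ hbc rfl)
            exact Or.inr (hdc ▸ hda)
      · rcases ih with hab | hba
        · rcases Relation.ReflTransGen.cases_tail hab with heq | ⟨d, had, hdb⟩
          · exact Or.inr (heq ▸ Relation.ReflTransGen.single hcb)
          · have hdc : d = c := congrArg Prod.fst (hsi _ hdb _ hcb rfl)
            exact Or.inl (hdc ▸ had)
        · exact Or.inr (Relation.ReflTransGen.head hcb hba)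
  · rintro (h | h)
    · exact upA_connA h
    · exact connA_symm (upA_connA h)

lemma connA_grid {A : Finset (ℕ × ℕ)} (hgrid : A ⊆ Finset.Icc 1 n ×ˢ Finset.Icc 1 n)
    {a b : ℕ} (h : connA A a b) (ha : a ∈ Finset.Icc 1 n) : b ∈ Finset.Icc 1 n := by
  induction h with
  | refl => exact ha
  | tail h₁ h₂ ih =>
    rcases h₂ with hx | hx
    · exact (Finset.mem_product.1 (hgrid hx)).2
    · exact (Finset.mem_product.1 (hgrid hx)).1

noncomputable def blockOfA (n : ℕ) (A : Finset (ℕ × ℕ)) (x : ℕ) : Finset ℕ :=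
  (Finset.Icc 1 n).filter (connA A x)

lemma self_mem_blockOfA {A : Finset (ℕ × ℕ)} {x : ℕ} (hx : x ∈ Finset.Icc 1 n) :
    x ∈ blockOfA n A x := Finset.mem_filter.2 ⟨hx, Relation.ReflTransGen.refl⟩

lemma blockOfA_eq_of_mem {A : Finset (ℕ × ℕ)} {x y : ℕ} (h : y ∈ blockOfA n A x) :
    blockOfA n A y = blockOfA n A x := by
  obtain ⟨hy, hconn⟩ := Finset.mem_filter.1 h
  ext z
  simp only [blockOfA, Finset.mem_filter, and_congr_right_iff]
  intro hz
  exact ⟨fun h2 => hconn.trans h2, fun h2 => (connA_symm hconn).trans h2⟩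

noncomputable def partnOf (n : ℕ) (A : Finset (ℕ × ℕ)) : Finpartition (Finset.Icc 1 n) where
  parts := (Finset.Icc 1 n).image (blockOfA n A)
  supIndep := by
    rw [Finset.supIndep_iff_pairwiseDisjoint]
    intro B hB C hC hne
    by_contra hdis
    obtain ⟨z, hzB, hzC⟩ := Finset.not_disjoint_iff.1 hdis
    obtain ⟨x, hx, rfl⟩ := Finset.mem_image.1 (Finset.mem_coe.1 hB)
    obtain ⟨y, hy, rfl⟩ := Finset.mem_image.1 (Finset.mem_coe.1 hC)
    exact hne (by rw [← blockOfA_eq_of_mem hzB, blockOfA_eq_of_mem hzC])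
  sup_parts := by
    apply le_antisymm
    · apply Finset.sup_le
      intro B hB
      obtain ⟨x, hx, rfl⟩ := Finset.mem_image.1 hB
      exact Finset.filter_subset _ _
    · intro x hx
      have h1 := Finset.le_sup (f := id) (Finset.mem_image_of_mem (blockOfA n A) hx)
      exact h1 (self_mem_blockOfA hx)
  bot_notMem := by
    intro h
    obtain ⟨x, hx, hB⟩ := Finset.mem_image.1 h
    have hxx := self_mem_blockOfA (A := A) hx
    rw [hB] at hxx
    simp at hxx

lemma partnOf_parts {A : Finset (ℕ × ℕ)} :
    (partnOf n A).parts = (Finset.Icc 1 n).image (blockOfA n A) := rfl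

lemma arcsOf_partnOf {A : Finset (ℕ × ℕ)}
    (hgrid : A ⊆ Finset.Icc 1 n ×ˢ Finset.Icc 1 n) (hinc : ∀ e ∈ A, e.1 < e.2)
    (hfi : ∀ e ∈ A, ∀ f ∈ A, e.1 = f.1 → e = f)
    (hsi : ∀ e ∈ A, ∀ f ∈ A, e.2 = f.2 → e = f) :
    arcsOf (partnOf n A) = A := by
  ext ⟨i, j⟩
  rw [mem_arcsOf]
  constructor
  · rintro ⟨hi, hj, hij, B, hB, hiB, hjB, hbet⟩
    rw [partnOf_parts] at hB
    obtain ⟨x, hx, rfl⟩ := Finset.mem_image.1 hB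
    have hconnxi : connA A x i := (Finset.mem_filter.1 hiB).2
    have hconnxj : connA A x j := (Finset.mem_filter.1 hjB).2
    have hconn : connA A i j := (connA_symm hconnxi).trans hconnxj
    have hup : upA A i j := by
      rcases (connA_iff hfi hsi).1 hconn with h | h
      · exact h
      · have := upA_le hinc h; omega
    rcases Relation.ReflTransGen.cases_head hup with heq | ⟨d, hid, hdj⟩
    · omega
    · have hdi : i < d := hinc _ hid
      have hdj' : d ≤ j := upA_le hinc hdj
      by_cases hdj2 : d = j
      · exact hdj2 ▸ hid
      · exfalso
        apply hbet d ?_ hdi (by omega)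
        exact Finset.mem_filter.2 ⟨(Finset.mem_product.1 (hgrid hid)).2,
          hconnxi.trans (Relation.ReflTransGen.single (Or.inl hid))⟩
  · intro hijA
    have hi : i ∈ Finset.Icc 1 n := (Finset.mem_product.1 (hgrid hijA)).1
    have hj : j ∈ Finset.Icc 1 n := (Finset.mem_product.1 (hgrid hijA)).2
    refine ⟨hi, hj, hinc _ hijA, blockOfA n A i,
      partnOf_parts ▸ Finset.mem_image_of_mem _ hi, self_mem_blockOfA hi,
      Finset.mem_filter.2 ⟨hj, Relation.ReflTransGen.single (Or.inl hijA)⟩, ?_⟩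
    intro k hk hik hkj
    have hconn : connA A i k := (Finset.mem_filter.1 hk).2
    have hup : upA A i k := by
      rcases (connA_iff hfi hsi).1 hconn with h | h
      · exact h
      · have := upA_le hinc h; omega
    rcases Relation.ReflTransGen.cases_head hup with heq | ⟨d, hid, hdk⟩
    · omega
    · have hd : d = j := congrArg Prod.snd (hfi _ hid _ hijA rfl)
      subst hd
      have := upA_le hinc hdk
      omega

lemma chain_reach {P : Finpartition (Finset.Icc 1 n)} {B : Finset ℕ} (hB : B ∈ P.parts) :
    ∀ d a b, a ∈ B → b ∈ B → a ≤ b → b - a ≤ d → upA (arcsOf P) a b := by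
  intro d
  induction d with
  | zero =>
    intro a b haB hbB hab hd
    have : a = b := by omega
    exact this ▸ Relation.ReflTransGen.refl
  | succ d ih =>
    intro a b haB hbB hab hd
    by_cases heq : a = b
    · exact heq ▸ Relation.ReflTransGen.refl
    · have hab' : a < b := lt_of_le_of_ne hab heq
      have hFne : (B.filter (fun k => a < k)).Nonempty :=
        ⟨b, Finset.mem_filter.2 ⟨hbB, hab'⟩⟩
      set c := (B.filter (fun k => a < k)).min' hFne with hc
      have hcF := (B.filter (fun k => a < k)).min'_mem hFne
      obtain ⟨hcB, hac⟩ := Finset.mem_filter.1 hcF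
      have hcb : c ≤ b := Finset.min'_le _ b (Finset.mem_filter.2 ⟨hbB, hab'⟩)
      have harc : (a, c) ∈ arcsOf P := by
        refine mem_arcsOf.2 ⟨P.le hB haB, P.le hB hcB, hac, B, hB, haB, hcB, ?_⟩
        intro k hkB hak hkc
        have : c ≤ k := Finset.min'_le _ k (Finset.mem_filter.2 ⟨hkB, hak⟩)
        omega
      exact Relation.ReflTransGen.head harc (ih c b hcB hbB hcb (by omega))

lemma rel_part_eq {P : Finpartition (Finset.Icc 1 n)} {a b : ℕ}
    (h : relA (arcsOf P) a b) : P.part a = P.part b := by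
  rcases h with h | h
  · obtain ⟨-, -, -, B, hB, haB, hbB, -⟩ := mem_arcsOf.1 h
    rw [P.part_eq_of_mem hB haB, P.part_eq_of_mem hB hbB]
  · obtain ⟨-, -, -, B, hB, hbB, haB, -⟩ := mem_arcsOf.1 h
    rw [P.part_eq_of_mem hB haB, P.part_eq_of_mem hB hbB]

lemma blockOfA_eq_part {P : Finpartition (Finset.Icc 1 n)} {x : ℕ}
    (hx : x ∈ Finset.Icc 1 n) : blockOfA n (arcsOf P) x = P.part x := by
  have hpart : ∀ a b : ℕ, connA (arcsOf P) a b → P.part a = P.part b := by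
    intro a b h
    induction h with
    | refl => rfl
    | tail h₁ h₂ ih => exact ih.trans (rel_part_eq h₂)
  ext y
  simp only [blockOfA, Finset.mem_filter]
  constructor
  · rintro ⟨hy, hconn⟩
    rw [hpart x y hconn]
    exact P.mem_part hy
  · intro hy
    have hyIcc : y ∈ Finset.Icc 1 n := P.le (P.part_mem.2 hx) hy
    refine ⟨hyIcc, ?_⟩
    have hxpart : x ∈ P.part x := P.mem_part hx
    rcases le_total x y with h | h
    · exact upA_connA (chain_reach (P.part_mem.2 hx) (y - x) x y hxpart hy h (le_refl _))
    · exact connA_symm (upA_connA (chain_reach (P.part_mem.2 hx) (x - y) y x hy hxpart h (le_refl _)))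

lemma partnOf_arcsOf (P : Finpartition (Finset.Icc 1 n)) : partnOf n (arcsOf P) = P := by
  apply Finpartition.ext
  rw [partnOf_parts]
  ext B
  constructor
  · intro hB
    obtain ⟨x, hx, rfl⟩ := Finset.mem_image.1 hB
    rw [blockOfA_eq_part hx]
    exact P.part_mem.2 hx
  · intro hB
    obtain ⟨x, hxB⟩ := P.nonempty_of_mem_parts hB
    have hx : x ∈ Finset.Icc 1 n := P.le hB hxB
    exact Finset.mem_image.2 ⟨x, hx, by rw [blockOfA_eq_part hx, P.part_eq_of_mem hB hxB]⟩

lemma partnOf_mem_pnST {S T : Finset ℕ} {A : Finset (ℕ × ℕ)}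
    (hS : S ⊆ Finset.Icc 1 n) (hT : T ⊆ Finset.Icc 1 n)
    (hA : A ∈ matchSet n S T) : partnOf n A ∈ pnST n S T := by
  obtain ⟨hgrid, hinc, hfst, hsnd, hc1, hc2⟩ := mem_matchSet.1 hA
  have hfi : ∀ e ∈ A, ∀ f ∈ A, e.1 = f.1 → e = f :=
    fun e he f hf h => fst_injOn hA (Finset.mem_coe.2 he) (Finset.mem_coe.2 hf) h
  have hsi : ∀ e ∈ A, ∀ f ∈ A, e.2 = f.2 → e = f :=
    fun e he f hf h => snd_injOn hA (Finset.mem_coe.2 he) (Finset.mem_coe.2 hf) h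
  have harcs : arcsOf (partnOf n A) = A := arcsOf_partnOf hgrid hinc hfi hsi
  refine Finset.mem_filter.2 ⟨Finset.mem_univ _, ?_, ?_⟩
  · have h1 := image_snd_arcsOf (partnOf n A)
    rw [harcs, hsnd] at h1
    have hmin : minsetOf (partnOf n A) ⊆ Finset.Icc 1 n := Finset.filter_subset _ _
    calc minsetOf (partnOf n A)
        = Finset.Icc 1 n \ (Finset.Icc 1 n \ minsetOf (partnOf n A)) :=
          (Finset.sdiff_sdiff_eq_self hmin).symm
      _ = Finset.Icc 1 n \ (Finset.Icc 1 n \ S) := by rw [← h1]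
      _ = S := Finset.sdiff_sdiff_eq_self hS
  · have h1 := image_fst_arcsOf (partnOf n A)
    rw [harcs, hfst] at h1
    have hmax : maxsetOf (partnOf n A) ⊆ Finset.Icc 1 n := Finset.filter_subset _ _
    calc maxsetOf (partnOf n A)
        = Finset.Icc 1 n \ (Finset.Icc 1 n \ maxsetOf (partnOf n A)) :=
          (Finset.sdiff_sdiff_eq_self hmax).symm
      _ = Finset.Icc 1 n \ (Finset.Icc 1 n \ T) := by rw [← h1]
      _ = T := Finset.sdiff_sdiff_eq_self hT

end PartA

theorem cr2_generating_function (n : ℕ) (S T : Finset ℕ)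
    (hS : S ⊆ Finset.Icc 1 n) (hT : T ⊆ Finset.Icc 1 n) (hcard : S.card = T.card)
    (R : Type*) [CommRing R] (y : R) :
    ∑ P ∈ pnST n S T, y ^ cr2 (arcsOf P) =
      ∏ i ∈ Finset.Icc 1 n \ T, ∑ j ∈ Finset.range (hST n S T i), y ^ j := by
  rw [← matchSum y n (Finset.Icc 1 n \ T).card S T hS hT hcard rfl]
  refine Finset.sum_nbij' (fun P => arcsOf P) (fun A => partnOf n A) ?_ ?_ ?_ ?_ ?_
  · intro P hP
    exact arcsOf_mem_matchSet hP
  · intro A hA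
    exact partnOf_mem_pnST hS hT hA
  · intro P hP
    exact partnOf_arcsOf P
  · intro A hA
    obtain ⟨hgrid, hinc, hfst, hsnd, hc1, hc2⟩ := mem_matchSet.1 hA
    exact arcsOf_partnOf hgrid hinc
      (fun e he f hf h => fst_injOn hA (Finset.mem_coe.2 he) (Finset.mem_coe.2 hf) h)
      (fun e he f hf h => snd_injOn hA (Finset.mem_coe.2 he) (Finset.mem_coe.2 hf) h)
  · intro P hP
    rfl
end

section
/- Fix S, T ⊆ [n] with |S| = |T|. Then the set of partitions P_n(S,T) is in bijection with the set of sequences (a₁,…,a_k) where {i₁ < i₂ < ⋯ < i_k} = [n] \ T and 1 ≤ a_r ≤ h(i_r) for each r, with h(i) = |T ∩ {i+1,…,n}| − |S ∩ {i+1,…,n}|; moreover under this bijection the partition corresponding to (a₁,…,a_k) has exactly ∑_{r=1}^k (a_r − 1) 2-crossings. -/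
open Finset
open scoped Classical

open Finset
open scoped Classical

namespace PnST

/-- abstract arc-set axioms for partitions in `pnST n S T` -/
structure Good (n : ℕ) (S T : Finset ℕ) (A : Finset (ℕ × ℕ)) : Prop where
  mem_lt : ∀ e ∈ A, e.1 ∈ Finset.Icc 1 n ∧ e.2 ∈ Finset.Icc 1 n ∧ e.1 < e.2
  left_unique : ∀ {i j j'}, (i,j) ∈ A → (i,j') ∈ A → j = j'
  right_unique : ∀ {u u' j}, (u,j) ∈ A → (u',j) ∈ A → u = u'
  left_iff : ∀ i ∈ Finset.Icc 1 n, (∃ j, (i,j) ∈ A) ↔ i ∉ T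
  right_iff : ∀ j ∈ Finset.Icc 1 n, (∃ u, (u,j) ∈ A) ↔ j ∉ S

variable {n : ℕ} {S T : Finset ℕ} {A : Finset (ℕ × ℕ)}


lemma Good.luniq (G : Good n S T A) {e f : ℕ × ℕ} (he : e ∈ A) (hf : f ∈ A)
    (h : e.1 = f.1) : e = f := by
  obtain ⟨e1, e2⟩ := e; obtain ⟨f1, f2⟩ := f
  simp only at h; subst h
  exact Prod.ext rfl (G.left_unique he hf)

lemma Good.runiq (G : Good n S T A) {e f : ℕ × ℕ} (he : e ∈ A) (hf : f ∈ A)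
    (h : e.2 = f.2) : e = f := by
  obtain ⟨e1, e2⟩ := e; obtain ⟨f1, f2⟩ := f
  simp only at h; subst h
  exact Prod.ext (G.right_unique he hf) rfl

/-- crossings whose second (inner-left) arc starts at `i` -/
noncomputable def cval (A : Finset (ℕ × ℕ)) (i : ℕ) : ℕ :=
  ((A ×ˢ A).filter (fun p => (p.1.1 < p.2.1 ∧ p.2.1 < p.1.2 ∧ p.1.2 < p.2.2) ∧ p.2.1 = i)).card

noncomputable def phi (n : ℕ) (T : Finset ℕ) (A : Finset (ℕ × ℕ)) (i : ℕ) : ℕ :=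
  if i ∈ Finset.Icc 1 n \ T then cval A i + 1 else 0

lemma cr2_eq_sum (G : Good n S T A) :
    cr2 A = ∑ i ∈ Finset.Icc 1 n \ T, cval A i := by
  unfold cr2 cval
  rw [Finset.card_eq_sum_card_fiberwise (f := fun p : (ℕ×ℕ)×(ℕ×ℕ) => p.2.1)
    (t := Finset.Icc 1 n \ T) ?_]
  · apply Finset.sum_congr rfl
    intro i _
    rw [Finset.filter_filter]
  · intro p hp
    simp only [Finset.mem_coe, Finset.mem_filter, Finset.mem_product] at hp
    obtain ⟨⟨h1, h2⟩, h3⟩ := hp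
    have hm := G.mem_lt p.2 h2
    rw [Finset.mem_coe, Finset.mem_sdiff]
    refine ⟨hm.1, ?_⟩
    rw [← G.left_iff p.2.1 hm.1]
    exact ⟨p.2.2, h2⟩

/-- the arcs spanning the gap between `i` and `i+1` -/
noncomputable def spanA (A : Finset (ℕ × ℕ)) (i : ℕ) : Finset (ℕ × ℕ) :=
  A.filter (fun e => e.1 ≤ i ∧ i < e.2)

lemma card_spanA (G : Good n S T A) (i : ℕ) : (spanA A i).card = hST n S T i := by
  classical
  have hR : (A.filter (fun e => i < e.2)).card = (Finset.Icc (i+1) n \ S).card := by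
    apply Finset.card_bij (fun e _ => e.2)
    · intro e he
      simp only [Finset.mem_filter] at he
      obtain ⟨heA, hie⟩ := he
      have hm := G.mem_lt e heA
      have hb := Finset.mem_Icc.1 hm.2.1
      simp only [Finset.mem_sdiff, Finset.mem_Icc]
      refine ⟨⟨by omega, hb.2⟩, ?_⟩
      rw [← G.right_iff e.2 hm.2.1]
      exact ⟨e.1, heA⟩
    · intro e he f hf hef
      simp only [Finset.mem_filter] at he hf
      have := G.right_unique (u := e.1) (u' := f.1) (j := e.2)
        (by simpa using he.1) (by rw [hef]; simpa using hf.1)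
      exact Prod.ext this hef
    · intro j hj
      simp only [Finset.mem_sdiff, Finset.mem_Icc] at hj
      have hj1 : j ∈ Finset.Icc 1 n := Finset.mem_Icc.2 ⟨by omega, hj.1.2⟩
      obtain ⟨u, hu⟩ := (G.right_iff j hj1).2 hj.2
      exact ⟨(u, j), Finset.mem_filter.2 ⟨hu, by simp; omega⟩, rfl⟩
  have hL : (A.filter (fun e => i < e.1)).card = (Finset.Icc (i+1) n \ T).card := by
    apply Finset.card_bij (fun e _ => e.1)
    · intro e he
      simp only [Finset.mem_filter] at he
      obtain ⟨heA, hie⟩ := he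
      have hm := G.mem_lt e heA
      have hb := Finset.mem_Icc.1 hm.1
      simp only [Finset.mem_sdiff, Finset.mem_Icc]
      refine ⟨⟨by omega, hb.2⟩, ?_⟩
      rw [← G.left_iff e.1 hm.1]
      exact ⟨e.2, heA⟩
    · intro e he f hf hef
      simp only [Finset.mem_filter] at he hf
      have := G.left_unique (i := e.1) (j := e.2) (j' := f.2)
        (by simpa using he.1) (by rw [hef]; simpa using hf.1)
      exact Prod.ext hef this
    · intro u hu
      simp only [Finset.mem_sdiff, Finset.mem_Icc] at hu
      have hu1 : u ∈ Finset.Icc 1 n := Finset.mem_Icc.2 ⟨by omega, hu.1.2⟩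
      obtain ⟨j, hj⟩ := (G.left_iff u hu1).2 hu.2
      exact ⟨(u, j), Finset.mem_filter.2 ⟨hj, by simp; omega⟩, rfl⟩
  have hsplit : (A.filter (fun e => i < e.2)).card
      = (spanA A i).card + (A.filter (fun e => i < e.1)).card := by
    unfold spanA
    rw [← Finset.card_union_of_disjoint]
    · congr 1
      ext e
      simp only [Finset.mem_union, Finset.mem_filter]
      constructor
      · rintro ⟨he, h2⟩
        rcases le_or_gt e.1 i with h | h
        · exact Or.inl ⟨he, h, h2⟩
        · exact Or.inr ⟨he, h⟩
      · rintro (⟨he, h1, h2⟩ | ⟨he, h1⟩)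
        · exact ⟨he, h2⟩
        · exact ⟨he, lt_trans h1 (G.mem_lt e he).2.2⟩
    · rw [Finset.disjoint_left]
      rintro e he he'
      simp only [Finset.mem_filter] at he he'
      omega
  have hScap : (Finset.Icc (i+1) n \ S).card + (S ∩ Finset.Icc (i+1) n).card
      = (Finset.Icc (i+1) n).card := by
    rw [Finset.inter_comm, Finset.card_sdiff_add_card_inter]
  have hTcap : (Finset.Icc (i+1) n \ T).card + (T ∩ Finset.Icc (i+1) n).card
      = (Finset.Icc (i+1) n).card := by
    rw [Finset.inter_comm, Finset.card_sdiff_add_card_inter]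
  unfold hST
  omega



/-- available right endpoints at `i`, computed from arcs with left endpoint `> i` -/
noncomputable def RiSet (n : ℕ) (S : Finset ℕ) (A : Finset (ℕ × ℕ)) (i : ℕ) : Finset ℕ :=
  (Finset.Icc (i+1) n \ S) \ ((A.filter (fun e => i < e.1)).image Prod.snd)

lemma spanA_image_snd (G : Good n S T A) (i : ℕ) :
    (spanA A i).image Prod.snd = RiSet n S A i := by
  ext v
  simp only [spanA, RiSet, Finset.mem_image, Finset.mem_filter, Finset.mem_sdiff,
    Finset.mem_Icc]
  constructor
  · rintro ⟨e, ⟨heA, h1, h2⟩, rfl⟩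
    have hm := G.mem_lt e heA
    have hb := Finset.mem_Icc.1 hm.2.1
    refine ⟨⟨⟨by omega, hb.2⟩, (G.right_iff e.2 hm.2.1).1 ⟨e.1, heA⟩⟩, ?_⟩
    rintro ⟨f, ⟨hfA, hf1⟩, hf2⟩
    have : f = e := G.runiq hfA heA hf2
    rw [this] at hf1
    omega
  · rintro ⟨⟨⟨h1, h2⟩, hvS⟩, hnot⟩
    have hv1 : v ∈ Finset.Icc 1 n := Finset.mem_Icc.2 ⟨by omega, h2⟩
    obtain ⟨u, hu⟩ := (G.right_iff v hv1).2 hvS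
    refine ⟨(u, v), ⟨hu, ?_, by omega⟩, rfl⟩
    by_contra h
    exact hnot ⟨(u,v), ⟨hu, by simpa using Nat.lt_of_not_le h⟩, rfl⟩

lemma snd_injOn_spanA (G : Good n S T A) (i : ℕ) :
    Set.InjOn Prod.snd ((spanA A i : Finset (ℕ × ℕ)) : Set (ℕ × ℕ)) := by
  intro e he f hf hef
  simp only [spanA, Finset.coe_filter, Set.mem_setOf_eq] at he hf
  exact G.runiq he.1 hf.1 hef

lemma cval_eq_rank (G : Good n S T A) {i j : ℕ} (hij : (i, j) ∈ A) :
    cval A i = ((RiSet n S A i).filter (· < j)).card := by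
  have key : ((RiSet n S A i).filter (· < j)) =
      ((spanA A i).filter (fun e => e.2 < j)).image Prod.snd := by
    rw [← spanA_image_snd G i]
    ext v
    simp only [Finset.mem_filter, Finset.mem_image]
    constructor
    · rintro ⟨⟨e, he, rfl⟩, hv⟩
      exact ⟨e, ⟨he, hv⟩, rfl⟩
    · rintro ⟨e, ⟨he, hv⟩, rfl⟩
      exact ⟨⟨e, he, rfl⟩, hv⟩
  rw [key, Finset.card_image_of_injOn ((snd_injOn_spanA G i).mono (by
    intro e he
    simp only [Finset.mem_coe, Finset.mem_filter] at he
    exact he.1))]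
  unfold cval
  apply Finset.card_bij (fun p _ => p.1)
  · rintro ⟨e, f⟩ hp
    simp only [Finset.mem_filter, Finset.mem_product] at hp
    obtain ⟨⟨heA, hfA⟩, ⟨hc1, hc2, hc3⟩, hc4⟩ := hp
    have hf : f = (i, j) := G.luniq hfA hij hc4
    rw [hf] at hc1 hc2 hc3
    simp only [spanA, Finset.mem_filter]
    exact ⟨⟨heA, le_of_lt hc1, hc2⟩, hc3⟩
  · rintro ⟨e, f⟩ hp ⟨e', f'⟩ hp' h
    simp only [Finset.mem_filter, Finset.mem_product] at hp hp'
    have hf : f = (i, j) := G.luniq hp.1.2 hij hp.2.2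
    have hf' : f' = (i, j) := G.luniq hp'.1.2 hij hp'.2.2
    simp only at h
    rw [hf, hf', h]
  · intro e he
    simp only [spanA, Finset.mem_filter] at he
    obtain ⟨⟨heA, h1, h2⟩, h3⟩ := he
    have h1' : e.1 < i := by
      rcases lt_or_eq_of_le h1 with h | h
      · exact h
      · exfalso
        have : e = (i, j) := G.luniq heA hij h
        rw [this] at h3
        omega
    refine ⟨(e, (i,j)), ?_, rfl⟩
    exact Finset.mem_filter.2 ⟨Finset.mem_product.2 ⟨heA, hij⟩, ⟨h1', h2, h3⟩, rfl⟩

lemma mem_spanA_self (hij : (i, j) ∈ A) (hlt : i < j) : (i, j) ∈ spanA A i :=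
  Finset.mem_filter.2 ⟨hij, le_refl i, hlt⟩

lemma phi_bounds (G : Good n S T A) (i : ℕ) (hi : i ∈ Finset.Icc 1 n \ T) :
    1 ≤ phi n T A i ∧ phi n T A i ≤ hST n S T i := by
  rw [phi, if_pos hi]
  refine ⟨by omega, ?_⟩
  obtain ⟨hi1, hi2⟩ := Finset.mem_sdiff.1 hi
  obtain ⟨j, hij⟩ := (G.left_iff i hi1).2 hi2
  have hlt : i < j := (G.mem_lt _ hij).2.2
  rw [cval_eq_rank G hij, ← card_spanA G i]
  have hjmem : j ∈ RiSet n S A i := by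
    rw [← spanA_image_snd G i]
    exact Finset.mem_image_of_mem _ (mem_spanA_self hij hlt)
  have hsub : (RiSet n S A i).filter (· < j) ⊆ (RiSet n S A i).erase j := by
    intro v hv
    simp only [Finset.mem_filter] at hv
    exact Finset.mem_erase.2 ⟨by omega, hv.1⟩
  have hcard : ((RiSet n S A i).filter (· < j)).card ≤ (RiSet n S A i).card - 1 := by
    calc ((RiSet n S A i).filter (· < j)).card
        ≤ ((RiSet n S A i).erase j).card := Finset.card_le_card hsub
      _ = (RiSet n S A i).card - 1 := by rw [Finset.card_erase_of_mem hjmem]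
  have hRc : (RiSet n S A i).card = (spanA A i).card := by
    rw [← spanA_image_snd G i, Finset.card_image_of_injOn (snd_injOn_spanA G i)]
  have hpos : 0 < (RiSet n S A i).card := Finset.card_pos.2 ⟨j, hjmem⟩
  omega

lemma rank_inj {s : Finset ℕ} {j j' : ℕ} (hj : j ∈ s) (hj' : j' ∈ s)
    (h : (s.filter (· < j)).card = (s.filter (· < j')).card) : j = j' := by
  rcases lt_trichotomy j j' with hlt | heq | hlt
  · exfalso
    have : (s.filter (· < j)).card < (s.filter (· < j')).card := by
      apply Finset.card_lt_card
      constructor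
      · intro v hv
        simp only [Finset.mem_filter] at hv ⊢
        exact ⟨hv.1, by omega⟩
      · intro hsub
        have : j ∈ s.filter (· < j) := hsub (Finset.mem_filter.2 ⟨hj, hlt⟩)
        simp at this
    omega
  · exact heq
  · exfalso
    have : (s.filter (· < j')).card < (s.filter (· < j)).card := by
      apply Finset.card_lt_card
      constructor
      · intro v hv
        simp only [Finset.mem_filter] at hv ⊢
        exact ⟨hv.1, by omega⟩
      · intro hsub
        have : j' ∈ s.filter (· < j') := hsub (Finset.mem_filter.2 ⟨hj', hlt⟩)
        simp at this
    omega

lemma exists_rank {s : Finset ℕ} {r : ℕ} (hr : r < s.card) :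
    ∃ j ∈ s, (s.filter (· < j)).card = r := by
  have hmaps : ∀ j ∈ s, (s.filter (· < j)).card ∈ Finset.range s.card := by
    intro j hj
    rw [Finset.mem_range]
    have hsub : s.filter (· < j) ⊆ s.erase j := by
      intro v hv
      simp only [Finset.mem_filter] at hv
      exact Finset.mem_erase.2 ⟨by omega, hv.1⟩
    calc (s.filter (· < j)).card ≤ (s.erase j).card := Finset.card_le_card hsub
      _ < s.card := Finset.card_erase_lt_of_mem hj
  have := Finset.surj_on_of_inj_on_of_card_le (s := s) (t := Finset.range s.card)
    (fun j _ => (s.filter (· < j)).card)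
    (fun j hj => hmaps j hj)
    (fun j j' hj hj' h => rank_inj hj hj' h)
    (by rw [Finset.card_range])
    r (Finset.mem_range.2 hr)
  obtain ⟨j, hj, hjr⟩ := this
  exact ⟨j, hj, hjr.symm⟩

lemma filter_left_gt_eq {A' : Finset (ℕ × ℕ)} (i : ℕ)
    (h : ∀ u v, i < u → ((u, v) ∈ A ↔ (u, v) ∈ A')) :
    A.filter (fun e => i < e.1) = A'.filter (fun e => i < e.1) := by
  ext e
  obtain ⟨u, v⟩ := e
  simp only [Finset.mem_filter]
  constructor
  · rintro ⟨hA, hu⟩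
    exact ⟨(h u v hu).1 hA, hu⟩
  · rintro ⟨hA, hu⟩
    exact ⟨(h u v hu).2 hA, hu⟩

lemma phi_injective {A' : Finset (ℕ × ℕ)} (G : Good n S T A) (G' : Good n S T A')
    (h : phi n T A = phi n T A') : A = A' := by
  have key : ∀ m : ℕ, ∀ u v : ℕ, n < u + m → ((u, v) ∈ A ↔ (u, v) ∈ A') := by
    intro m
    induction m with
    | zero =>
      intro u v hu
      constructor
      · intro hA
        have := (G.mem_lt _ hA).1
        rw [Finset.mem_Icc] at this
        omega
      · intro hA
        have := (G'.mem_lt _ hA).1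
        rw [Finset.mem_Icc] at this
        omega
    | succ m ih =>
      intro u v hu
      rcases Nat.lt_or_ge n (u + m) with h' | h'
      · exact ih u v h'
      -- u = n - m exactly; arcs above u agree
      have habove : ∀ u' v' : ℕ, u < u' → ((u', v') ∈ A ↔ (u', v') ∈ A') := by
        intro u' v' hu'
        exact ih u' v' (by omega)
      by_cases hu1 : u ∈ Finset.Icc 1 n
      case neg =>
        constructor
        · intro hA; exact absurd (G.mem_lt _ hA).1 hu1
        · intro hA; exact absurd (G'.mem_lt _ hA).1 hu1
      by_cases huT : u ∈ T
      case pos =>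
        constructor
        · intro hA; exact absurd ((G.left_iff u hu1).1 ⟨v, hA⟩) (by simp [huT])
        · intro hA; exact absurd ((G'.left_iff u hu1).1 ⟨v, hA⟩) (by simp [huT])
      -- the interesting case
      obtain ⟨j, hj⟩ := (G.left_iff u hu1).2 huT
      obtain ⟨j', hj'⟩ := (G'.left_iff u hu1).2 huT
      have hRi : RiSet n S A u = RiSet n S A' u := by
        unfold RiSet
        rw [filter_left_gt_eq u habove]
      have hc : cval A u = cval A' u := by
        have h1 := congrFun h u
        rw [phi, phi, if_pos (Finset.mem_sdiff.2 ⟨hu1, huT⟩),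
          if_pos (Finset.mem_sdiff.2 ⟨hu1, huT⟩)] at h1
        omega
      have hjmem : j ∈ RiSet n S A u := by
        rw [← spanA_image_snd G u]
        exact Finset.mem_image_of_mem _ (mem_spanA_self hj (G.mem_lt _ hj).2.2)
      have hjmem' : j' ∈ RiSet n S A u := by
        rw [hRi, ← spanA_image_snd G' u]
        exact Finset.mem_image_of_mem _ (mem_spanA_self hj' (G'.mem_lt _ hj').2.2)
      have hjj' : j = j' := by
        apply rank_inj hjmem hjmem'
        rw [← cval_eq_rank G hj]
        have := cval_eq_rank G' hj'
        rw [← hRi] at this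
        rw [hc, this]
      subst hjj'
      constructor
      · intro hA
        have : v = j := G.left_unique hA hj
        subst this
        exact hj'
      · intro hA
        have : v = j := G'.left_unique hA hj'
        subst this
        exact hj
  ext e
  obtain ⟨u, v⟩ := e
  exact key (n + 1) u v (by omega)

def rA (A : Finset (ℕ × ℕ)) (u v : ℕ) : Prop := (u, v) ∈ A

def reach (A : Finset (ℕ × ℕ)) : ℕ → ℕ → Prop := Relation.ReflTransGen (rA A)

lemma reach_le (G : Good n S T A) {u v : ℕ} (h : reach A u v) : u ≤ v := by
  induction h with
  | refl => exact le_refl _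
  | tail h' e ih => exact le_trans ih (le_of_lt (G.mem_lt _ e).2.2)

lemma merge_src (G : Good n S T A) {a b c : ℕ} (hab : reach A a b) (hac : reach A a c) :
    reach A b c ∨ reach A c b := by
  induction hab using Relation.ReflTransGen.head_induction_on generalizing c with
  | refl => exact Or.inl hac
  | head h' hrest ih =>
    rcases Relation.ReflTransGen.cases_head hac with heq | ⟨c₁, hc₁, hrest'⟩
    · subst heq
      exact Or.inr (Relation.ReflTransGen.head h' hrest)
    · have : c₁ = _ := G.left_unique hc₁ h'
      subst this
      exact ih hrest'

lemma merge_tgt (G : Good n S T A) {b c z : ℕ} (hbz : reach A b z) (hcz : reach A c z) :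
    reach A b c ∨ reach A c b := by
  induction hbz generalizing c with
  | refl => exact Or.inr hcz
  | @tail m z' hbm harc ih =>
    rcases Relation.ReflTransGen.cases_tail hcz with heq | ⟨m', hcm', harc'⟩
    · subst heq
      exact Or.inl (Relation.ReflTransGen.tail hbm harc)
    · have : m' = m := G.right_unique harc' harc
      subst this
      exact ih hcm'

/-- same-block relation generated by the arcs -/
def sb (A : Finset (ℕ × ℕ)) (u v : ℕ) : Prop := ∃ z, reach A u z ∧ reach A v z

lemma sb_refl (u : ℕ) : sb A u u := ⟨u, Relation.ReflTransGen.refl, Relation.ReflTransGen.refl⟩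

lemma sb_symm {u v : ℕ} (h : sb A u v) : sb A v u := by
  obtain ⟨z, h1, h2⟩ := h
  exact ⟨z, h2, h1⟩

lemma sb_trans (G : Good n S T A) {u v w : ℕ} (h1 : sb A u v) (h2 : sb A v w) : sb A u w := by
  obtain ⟨z1, hu1, hv1⟩ := h1
  obtain ⟨z2, hv2, hw2⟩ := h2
  rcases merge_src G hv1 hv2 with h | h
  · exact ⟨z2, Relation.ReflTransGen.trans hu1 h, hw2⟩
  · exact ⟨z1, hu1, Relation.ReflTransGen.trans hw2 h⟩

lemma sb_of_arc {u v : ℕ} (h : (u, v) ∈ A) : sb A u v :=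
  ⟨v, Relation.ReflTransGen.single h, Relation.ReflTransGen.refl⟩

lemma reach_of_sb (G : Good n S T A) {u v : ℕ} (h : sb A u v) (huv : u ≤ v) :
    reach A u v := by
  obtain ⟨z, h1, h2⟩ := h
  rcases merge_tgt G h1 h2 with h | h
  · exact h
  · have := reach_le G h
    have : u = v := le_antisymm huv this
    subst this
    exact Relation.ReflTransGen.refl

lemma reach_in_Icc (G : Good n S T A) {u v : ℕ} (h : reach A u v) (hu : u ∈ Finset.Icc 1 n) :
    v ∈ Finset.Icc 1 n := by
  induction h with
  | refl => exact hu
  | tail h' e ih => exact (G.mem_lt _ e).2.1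

lemma sb_in_Icc (G : Good n S T A) {u v : ℕ} (h : sb A u v) (hu : u ∈ Finset.Icc 1 n)
    (hv1 : 1 ≤ v) : v ∈ Finset.Icc 1 n := by
  obtain ⟨z, h1, h2⟩ := h
  have hz := reach_in_Icc G h1 hu
  have := reach_le G h2
  rw [Finset.mem_Icc] at hz ⊢
  omega

noncomputable def partOf (n : ℕ) (A : Finset (ℕ × ℕ)) (i : ℕ) : Finset ℕ :=
  (Finset.Icc 1 n).filter (fun k => sb A i k)

lemma mem_partOf {i k : ℕ} : k ∈ partOf n A i ↔ k ∈ Finset.Icc 1 n ∧ sb A i k := by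
  simp [partOf]

lemma partOf_eq_of_sb (G : Good n S T A) {i j : ℕ} (h : sb A i j) :
    partOf n A i = partOf n A j := by
  ext k
  simp only [mem_partOf]
  exact ⟨fun ⟨hk, hs⟩ => ⟨hk, sb_trans G (sb_symm h) hs⟩,
    fun ⟨hk, hs⟩ => ⟨hk, sb_trans G h hs⟩⟩

noncomputable def mkPart (G : Good n S T A) : Finpartition (Finset.Icc 1 n) where
  parts := (Finset.Icc 1 n).image (partOf n A)
  supIndep := by
    rw [Finset.supIndep_iff_pairwiseDisjoint]
    intro p hp q hq hpq
    simp only [Finset.coe_image, Set.mem_image, Finset.mem_coe] at hp hq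
    obtain ⟨i, hi, rfl⟩ := hp
    obtain ⟨j, hj, rfl⟩ := hq
    simp only [Function.onFun, id]
    rw [Finset.disjoint_left]
    intro k hk hk'
    rw [mem_partOf] at hk hk'
    exact hpq (partOf_eq_of_sb G (sb_trans G hk.2 (sb_symm hk'.2)))
  sup_parts := by
    apply le_antisymm
    · apply Finset.sup_le
      intro p hp
      simp only [Finset.mem_image] at hp
      obtain ⟨i, hi, rfl⟩ := hp
      intro k hk
      exact (mem_partOf.1 hk).1
    · intro i hi
      rw [Finset.mem_sup]
      exact ⟨partOf n A i, Finset.mem_image_of_mem _ hi,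
        mem_partOf.2 ⟨hi, sb_refl i⟩⟩
  bot_notMem := by
    simp only [Finset.bot_eq_empty, Finset.mem_image]
    rintro ⟨i, hi, h⟩
    have : i ∈ partOf n A i := mem_partOf.2 ⟨hi, sb_refl i⟩
    rw [h] at this
    simp at this

lemma no_arc_into (G : Good n S T A) {i : ℕ} (hi : i ∈ Finset.Icc 1 n) (hiS : i ∈ S)
    {j : ℕ} (h : sb A i j) : i ≤ j := by
  by_contra hlt
  push_neg at hlt
  have hr : reach A j i := reach_of_sb G (sb_symm h) (le_of_lt hlt)
  rcases Relation.ReflTransGen.cases_tail hr with heq | ⟨m, _, harc⟩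
  · omega
  · exact absurd hiS (by simpa using (G.right_iff i hi).1 ⟨m, harc⟩)

lemma no_arc_outof (G : Good n S T A) {i : ℕ} (hi : i ∈ Finset.Icc 1 n) (hiT : i ∈ T)
    {j : ℕ} (h : sb A i j) : j ≤ i := by
  by_contra hlt
  push_neg at hlt
  have hr : reach A i j := reach_of_sb G h (le_of_lt hlt)
  rcases Relation.ReflTransGen.cases_head hr with heq | ⟨m, harc, _⟩
  · omega
  · exact absurd hiT (by simpa using (G.left_iff i hi).1 ⟨m, harc⟩)

lemma arcs_mkPart (G : Good n S T A) : arcsOf (mkPart G) = A := by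
  ext e
  obtain ⟨u, v⟩ := e
  simp only [arcsOf, Finset.mem_filter, Finset.mem_product]
  constructor
  · rintro ⟨⟨hu, hv⟩, huv, B, hB, huB, hvB, hbet⟩
    simp only [mkPart, Finset.mem_image] at hB
    obtain ⟨i, hi, rfl⟩ := hB
    have hsb : sb A u v := sb_trans G (sb_symm (mem_partOf.1 huB).2) (mem_partOf.1 hvB).2
    have hr : reach A u v := reach_of_sb G hsb (le_of_lt huv)
    rcases Relation.ReflTransGen.cases_head hr with heq | ⟨w, harc, hrest⟩
    · omega
    · have hwv : w ≤ v := reach_le G hrest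
      rcases lt_or_eq_of_le hwv with hlt | heq
      · exfalso
        apply hbet w
        · rw [mem_partOf]
          exact ⟨(G.mem_lt _ harc).2.1,
            sb_trans G (mem_partOf.1 huB).2 (sb_of_arc harc)⟩
        · exact (G.mem_lt _ harc).2.2
        · exact hlt
      · rw [← heq]; exact harc
  · intro hA
    have hm := G.mem_lt _ hA
    refine ⟨⟨hm.1, hm.2.1⟩, hm.2.2, partOf n A u, ?_, ?_, ?_, ?_⟩
    · simp only [mkPart, Finset.mem_image]
      exact ⟨u, hm.1, rfl⟩
    · exact mem_partOf.2 ⟨hm.1, sb_refl u⟩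
    · exact mem_partOf.2 ⟨hm.2.1, sb_of_arc hA⟩
    · intro k hk h1 h2
      have hsb := (mem_partOf.1 hk).2
      have hr : reach A u k := reach_of_sb G hsb (le_of_lt h1)
      rcases Relation.ReflTransGen.cases_head hr with heq | ⟨w, harc, hrest⟩
      · omega
      · have : w = v := G.left_unique harc hA
        subst this
        have := reach_le G hrest
        omega

lemma minset_mkPart (G : Good n S T A) (hS : S ⊆ Finset.Icc 1 n) :
    minsetOf (mkPart G) = S := by
  ext i
  simp only [minsetOf, Finset.mem_filter]
  constructor
  · rintro ⟨hi, B, hB, hiB, hmin⟩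
    simp only [mkPart, Finset.mem_image] at hB
    obtain ⟨i₀, hi₀, rfl⟩ := hB
    by_contra hiS
    obtain ⟨u, hu⟩ := (G.right_iff i hi).2 hiS
    have huB : u ∈ partOf n A i₀ := mem_partOf.2 ⟨(G.mem_lt _ hu).1,
      sb_trans G (mem_partOf.1 hiB).2 (sb_symm (sb_of_arc hu))⟩
    have := hmin u huB
    have := (G.mem_lt _ hu).2.2
    omega
  · intro hiS
    have hi : i ∈ Finset.Icc 1 n := hS hiS
    refine ⟨hi, partOf n A i, ?_, mem_partOf.2 ⟨hi, sb_refl i⟩, ?_⟩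
    · simp only [mkPart, Finset.mem_image]
      exact ⟨i, hi, rfl⟩
    · intro j hj
      exact no_arc_into G hi hiS (mem_partOf.1 hj).2

lemma maxset_mkPart (G : Good n S T A) (hT : T ⊆ Finset.Icc 1 n) :
    maxsetOf (mkPart G) = T := by
  ext i
  simp only [maxsetOf, Finset.mem_filter]
  constructor
  · rintro ⟨hi, B, hB, hiB, hmax⟩
    simp only [mkPart, Finset.mem_image] at hB
    obtain ⟨i₀, hi₀, rfl⟩ := hB
    by_contra hiT
    obtain ⟨j, hj⟩ := (G.left_iff i hi).2 hiT
    have hjB : j ∈ partOf n A i₀ := mem_partOf.2 ⟨(G.mem_lt _ hj).2.1,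
      sb_trans G (mem_partOf.1 hiB).2 (sb_of_arc hj)⟩
    have := hmax j hjB
    have := (G.mem_lt _ hj).2.2
    omega
  · intro hiT
    have hi : i ∈ Finset.Icc 1 n := hT hiT
    refine ⟨hi, partOf n A i, ?_, mem_partOf.2 ⟨hi, sb_refl i⟩, ?_⟩
    · simp only [mkPart, Finset.mem_image]
      exact ⟨i, hi, rfl⟩
    · intro j hj
      exact no_arc_outof G hi hiT (mem_partOf.1 hj).2

lemma mkPart_mem (G : Good n S T A) (hS : S ⊆ Finset.Icc 1 n)
    (hT : T ⊆ Finset.Icc 1 n) : mkPart G ∈ pnST n S T := by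
  simp only [pnST, Finset.mem_filter, Finset.mem_univ, true_and]
  exact ⟨minset_mkPart G hS, maxset_mkPart G hT⟩

variable {P Q : Finpartition (Finset.Icc 1 n)}

lemma arc_step (P : Finpartition (Finset.Icc 1 n)) {B : Finset ℕ} (hB : B ∈ P.parts)
    {i : ℕ} (hi : i ∈ B) (hne : (B.filter (fun k => i < k)).Nonempty) :
    (i, (B.filter (fun k => i < k)).min' hne) ∈ arcsOf P := by
  set v := (B.filter (fun k => i < k)).min' hne with hv
  have hvmem := (B.filter (fun k => i < k)).min'_mem hne
  rw [Finset.mem_filter] at hvmem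
  simp only [arcsOf, Finset.mem_filter, Finset.mem_product]
  refine ⟨⟨P.le hB hi, P.le hB hvmem.1⟩, hvmem.2, B, hB, hi, hvmem.1, ?_⟩
  intro k hk h1 h2
  have : v ≤ k := Finset.min'_le _ k (Finset.mem_filter.2 ⟨hk, h1⟩)
  omega

lemma same_block_reach (P : Finpartition (Finset.Icc 1 n)) {B : Finset ℕ}
    (hB : B ∈ P.parts) :
    ∀ d : ℕ, ∀ i j : ℕ, i ∈ B → j ∈ B → i ≤ j → j - i ≤ d → reach (arcsOf P) i j := by
  intro d
  induction d with
  | zero =>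
    intro i j hi hj hij hd
    have : i = j := by omega
    subst this
    exact Relation.ReflTransGen.refl
  | succ d ih =>
    intro i j hi hj hij hd
    rcases eq_or_lt_of_le hij with heq | hlt
    · subst heq; exact Relation.ReflTransGen.refl
    · have hne : (B.filter (fun k => i < k)).Nonempty := ⟨j, Finset.mem_filter.2 ⟨hj, hlt⟩⟩
      set v := (B.filter (fun k => i < k)).min' hne with hv
      have harc := arc_step P hB hi hne
      have hvmem := (B.filter (fun k => i < k)).min'_mem hne
      rw [Finset.mem_filter] at hvmem
      have hvj : v ≤ j := Finset.min'_le _ j (Finset.mem_filter.2 ⟨hj, hlt⟩)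
      exact Relation.ReflTransGen.head harc (ih v j hvmem.1 hj hvj (by omega))

lemma reach_same_block_fwd (P : Finpartition (Finset.Icc 1 n)) {B : Finset ℕ}
    (hB : B ∈ P.parts) {i z : ℕ} (h : reach (arcsOf P) i z) (hi : i ∈ B) : z ∈ B := by
  induction h with
  | refl => exact hi
  | @tail m z' hm harc ih =>
    simp only [rA, arcsOf, Finset.mem_filter, Finset.mem_product] at harc
    obtain ⟨_, _, B', hB', hmB', hzB', _⟩ := harc
    rwa [← P.eq_of_mem_parts hB hB' ih hmB'] at hzB'

lemma reach_same_block_bwd (P : Finpartition (Finset.Icc 1 n)) {B : Finset ℕ}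
    (hB : B ∈ P.parts) {a b : ℕ} (h : reach (arcsOf P) a b) (hb : b ∈ B) : a ∈ B := by
  induction h with
  | refl => exact hb
  | @tail m z' hm harc ih =>
    apply ih
    simp only [rA, arcsOf, Finset.mem_filter, Finset.mem_product] at harc
    obtain ⟨_, _, B', hB', hmB', hzB', _⟩ := harc
    rwa [← P.eq_of_mem_parts hB hB' hb hzB'] at hmB'

lemma block_eq_partOf (P : Finpartition (Finset.Icc 1 n)) {B : Finset ℕ}
    (hB : B ∈ P.parts) {i : ℕ} (hi : i ∈ B) : B = partOf n (arcsOf P) i := by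
  ext j
  rw [mem_partOf]
  constructor
  · intro hj
    refine ⟨P.le hB hj, ?_⟩
    rcases le_total i j with h | h
    · exact ⟨j, same_block_reach P hB (j - i) i j hi hj h (le_refl _), .refl⟩
    · exact ⟨i, .refl, same_block_reach P hB (i - j) j i hj hi h (le_refl _)⟩
  · rintro ⟨hj, z, hiz, hjz⟩
    exact reach_same_block_bwd P hB hjz (reach_same_block_fwd P hB hiz hi)

lemma good_arcsOf (hP : P ∈ pnST n S T) : Good n S T (arcsOf P) := by
  simp only [pnST, Finset.mem_filter, Finset.mem_univ, true_and] at hP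
  obtain ⟨hmin, hmax⟩ := hP
  constructor
  · intro e he
    simp only [arcsOf, Finset.mem_filter, Finset.mem_product] at he
    exact ⟨he.1.1, he.1.2, he.2.1⟩
  · intro i j j' hj hj'
    simp only [arcsOf, Finset.mem_filter, Finset.mem_product] at hj hj'
    obtain ⟨⟨hi1, hj1⟩, hij, B, hB, hiB, hjB, hbet⟩ := hj
    obtain ⟨⟨_, hj1'⟩, hij', B', hB', hiB', hjB', hbet'⟩ := hj'
    have hBB : B = B' := P.eq_of_mem_parts hB hB' hiB hiB'
    subst hBB
    by_contra hne
    rcases lt_or_gt_of_ne hne with h | h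
    · exact hbet' j hjB hij h
    · exact hbet j' hjB' hij' h
  · intro u u' j hu hu'
    simp only [arcsOf, Finset.mem_filter, Finset.mem_product] at hu hu'
    obtain ⟨⟨hu1, hj1⟩, huj, B, hB, huB, hjB, hbet⟩ := hu
    obtain ⟨⟨hu1', _⟩, huj', B', hB', huB', hjB', hbet'⟩ := hu'
    have hBB : B = B' := P.eq_of_mem_parts hB hB' hjB hjB'
    subst hBB
    by_contra hne
    rcases lt_or_gt_of_ne hne with h | h
    · exact hbet u' huB' h huj'
    · exact hbet' u huB h huj
  · intro i hi
    constructor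
    · rintro ⟨j, hj⟩ hiT
      simp only [arcsOf, Finset.mem_filter, Finset.mem_product] at hj
      obtain ⟨_, hij, B, hB, hiB, hjB, _⟩ := hj
      rw [← hmax] at hiT
      simp only [maxsetOf, Finset.mem_filter] at hiT
      obtain ⟨_, B', hB', hiB', hmaxB⟩ := hiT
      have : B = B' := P.eq_of_mem_parts hB hB' hiB hiB'
      subst this
      have := hmaxB j hjB
      omega
    · intro hiT
      obtain ⟨B, hB, hiB⟩ := P.exists_mem hi
      have hne : (B.filter (fun k => i < k)).Nonempty := by
        by_contra hempty
        apply hiT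
        rw [← hmax]
        simp only [maxsetOf, Finset.mem_filter]
        refine ⟨hi, B, hB, hiB, ?_⟩
        intro j hj
        by_contra hji
        exact hempty ⟨j, Finset.mem_filter.2 ⟨hj, by omega⟩⟩
      exact ⟨_, arc_step P hB hiB hne⟩
  · intro j hj
    constructor
    · rintro ⟨u, hu⟩ hjS
      simp only [arcsOf, Finset.mem_filter, Finset.mem_product] at hu
      obtain ⟨_, huj, B, hB, huB, hjB, _⟩ := hu
      rw [← hmin] at hjS
      simp only [minsetOf, Finset.mem_filter] at hjS
      obtain ⟨_, B', hB', hjB', hminB⟩ := hjS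
      have : B = B' := P.eq_of_mem_parts hB hB' hjB hjB'
      subst this
      have := hminB u huB
      omega
    · intro hjS
      obtain ⟨B, hB, hjB⟩ := P.exists_mem hj
      have hne : (B.filter (fun k => k < j)).Nonempty := by
        by_contra hempty
        apply hjS
        rw [← hmin]
        simp only [minsetOf, Finset.mem_filter]
        refine ⟨hj, B, hB, hjB, ?_⟩
        intro i hi
        by_contra hij
        exact hempty ⟨i, Finset.mem_filter.2 ⟨hi, by omega⟩⟩
      set u := (B.filter (fun k => k < j)).max' hne with hu
      have humem := (B.filter (fun k => k < j)).max'_mem hne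
      rw [Finset.mem_filter] at humem
      refine ⟨u, ?_⟩
      simp only [arcsOf, Finset.mem_filter, Finset.mem_product]
      refine ⟨⟨P.le hB humem.1, P.le hB hjB⟩, humem.2, B, hB, humem.1, hjB, ?_⟩
      intro k hk h1 h2
      have : k ≤ u := Finset.le_max' (B.filter (fun m => m < j)) k (Finset.mem_filter.2 ⟨hk, h2⟩)
      omega

lemma arcsOf_injective (hP : P ∈ pnST n S T) (hQ : Q ∈ pnST n S T)
    (h : arcsOf P = arcsOf Q) : P = Q := by
  have hparts : P.parts = Q.parts := by
    ext B
    constructor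
    · intro hB
      obtain ⟨i, hiB⟩ := P.nonempty_of_mem_parts hB
      have hi : i ∈ Finset.Icc 1 n := P.le hB hiB
      obtain ⟨C, hC, hiC⟩ := Q.exists_mem hi
      have h1 := block_eq_partOf P hB hiB
      have h2 := block_eq_partOf Q hC hiC
      rw [h] at h1
      rw [h1, ← h2]
      exact hC
    · intro hB
      obtain ⟨i, hiB⟩ := Q.nonempty_of_mem_parts hB
      have hi : i ∈ Finset.Icc 1 n := Q.le hB hiB
      obtain ⟨C, hC, hiC⟩ := P.exists_mem hi
      have h1 := block_eq_partOf Q hB hiB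
      have h2 := block_eq_partOf P hC hiC
      rw [← h] at h1
      rw [h1, ← h2]
      exact hC
  cases P; cases Q; simpa using hparts

/-- invariant for the partial arc sets built from right to left -/
structure Inv (n : ℕ) (S T : Finset ℕ) (a : ℕ → ℕ) (i : ℕ) (B : Finset (ℕ × ℕ)) : Prop where
  bnd : ∀ e ∈ B, i < e.1 ∧ e.1 ≤ n ∧ e.1 < e.2 ∧ e.2 ≤ n ∧ e.2 ∉ S
  lu : ∀ {u v v'}, (u,v) ∈ B → (u,v') ∈ B → v = v'
  ru : ∀ {u u' v}, (u,v) ∈ B → (u',v) ∈ B → u = u'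
  lep : ∀ u, i < u → u ≤ n → ((∃ v, (u,v) ∈ B) ↔ u ∉ T)
  rk : ∀ u v, (u,v) ∈ B → v ∈ RiSet n S B u ∧ ((RiSet n S B u).filter (· < v)).card + 1 = a u

variable {a : ℕ → ℕ}

lemma inv_card_left {i : ℕ} {B : Finset (ℕ × ℕ)} (I : Inv n S T a i B) :
    B.card = (Finset.Icc (i+1) n \ T).card := by
  apply Finset.card_bij (fun e _ => e.1)
  · intro e he
    have hb := I.bnd e he
    simp only [Finset.mem_sdiff, Finset.mem_Icc]
    exact ⟨⟨by omega, hb.2.1⟩, (I.lep e.1 hb.1 hb.2.1).1 ⟨e.2, by simpa using he⟩⟩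
  · intro e he f hf hef
    have : e.2 = f.2 := I.lu (u := e.1) (by simpa using he) (by rw [hef]; simpa using hf)
    exact Prod.ext hef this
  · intro u hu
    simp only [Finset.mem_sdiff, Finset.mem_Icc] at hu
    obtain ⟨v, hv⟩ := (I.lep u (by omega) hu.1.2).2 hu.2
    exact ⟨(u,v), hv, rfl⟩

lemma inv_snd_subset {i : ℕ} {B : Finset (ℕ × ℕ)} (I : Inv n S T a i B) :
    B.image Prod.snd ⊆ Finset.Icc (i+2) n \ S := by
  intro v hv
  simp only [Finset.mem_image] at hv
  obtain ⟨e, he, rfl⟩ := hv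
  have hb := I.bnd e he
  simp only [Finset.mem_sdiff, Finset.mem_Icc]
  exact ⟨⟨by omega, hb.2.2.2.1⟩, hb.2.2.2.2⟩

lemma inv_card_snd {i : ℕ} {B : Finset (ℕ × ℕ)} (I : Inv n S T a i B) :
    (B.image Prod.snd).card = B.card := by
  apply Finset.card_image_of_injOn
  intro e he f hf hef
  obtain ⟨e1, e2⟩ := e; obtain ⟨f1, f2⟩ := f
  simp only [Finset.mem_coe] at he hf
  simp only at hef
  subst hef
  exact Prod.ext (I.ru he hf) rfl

lemma inv_exists (hS : S ⊆ Finset.Icc 1 n) (hT : T ⊆ Finset.Icc 1 n)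
    (ha : ∀ u ∈ Finset.Icc 1 n \ T, 1 ≤ a u ∧ a u ≤ hST n S T u) :
    ∀ m i : ℕ, i + m = n → ∃ B, Inv n S T a i B := by
  intro m
  induction m with
  | zero =>
    intro i hi
    refine ⟨∅, fun e he => absurd he (Finset.notMem_empty e),
      fun h _ => absurd h (Finset.notMem_empty _),
      fun h _ => absurd h (Finset.notMem_empty _), ?_,
      fun u v h => absurd h (Finset.notMem_empty _)⟩
    intro u h1 h2
    exact (by omega : False).elim
  | succ m ih =>
    intro i hi
    obtain ⟨B, I⟩ := ih (i+1) (by omega)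
    by_cases hiT : (i+1) ∈ T
    · refine ⟨B, ?_, I.lu, I.ru, ?_, I.rk⟩
      · intro e he
        have hb := I.bnd e he
        exact ⟨by omega, hb.2⟩
      · intro u hu1 hu2
        rcases Nat.lt_or_ge (i+1) u with h | h
        · exact I.lep u h hu2
        · have hu : u = i + 1 := by omega
          subst hu
          constructor
          · rintro ⟨v, hv⟩
            have := (I.bnd _ hv).1
            omega
          · intro h'
            exact absurd hiT h'
    · -- add an arc at u = i+1
      set u := i + 1 with hu
      have huIcc : u ∈ Finset.Icc 1 n \ T := by
        simp only [Finset.mem_sdiff, Finset.mem_Icc]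
        exact ⟨⟨by omega, by omega⟩, hiT⟩
      have hfilterB : B.filter (fun e => u < e.1) = B := by
        apply Finset.filter_true_of_mem
        intro e he
        exact (I.bnd e he).1
      have hRi : RiSet n S B u = (Finset.Icc (u+1) n \ S) \ B.image Prod.snd := by
        rw [RiSet, hfilterB]
      have hsub : B.image Prod.snd ⊆ Finset.Icc (u+1) n \ S :=
        (inv_snd_subset I).trans
          (Finset.sdiff_subset_sdiff (Finset.Icc_subset_Icc (by omega) le_rfl) le_rfl)
      have hcardR : (RiSet n S B u).card = hST n S T u := by
        rw [hRi, Finset.card_sdiff_of_subset hsub]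
        have h1 := inv_card_snd I
        have h2 := inv_card_left I
        have h3 : (Finset.Icc (u+1) n \ S).card + (S ∩ Finset.Icc (u+1) n).card
            = (Finset.Icc (u+1) n).card := by
          rw [Finset.inter_comm, Finset.card_sdiff_add_card_inter]
        have h4 : (Finset.Icc (u+1) n \ T).card + (T ∩ Finset.Icc (u+1) n).card
            = (Finset.Icc (u+1) n).card := by
          rw [Finset.inter_comm, Finset.card_sdiff_add_card_inter]
        have h5 : (B.image Prod.snd).card ≤ (Finset.Icc (u+1) n \ S).card :=
          Finset.card_le_card hsub
        unfold hST
        omega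
      obtain ⟨hau1, hau2⟩ := ha u huIcc
      obtain ⟨v, hvR, hvrank⟩ := exists_rank (s := RiSet n S B u) (r := a u - 1)
        (by omega)
      have hvfacts : u + 1 ≤ v ∧ v ≤ n ∧ v ∉ S ∧ v ∉ B.image Prod.snd := by
        rw [hRi] at hvR
        simp only [Finset.mem_sdiff, Finset.mem_Icc] at hvR
        exact ⟨hvR.1.1.1, hvR.1.1.2, hvR.1.2, hvR.2⟩
      refine ⟨insert (u, v) B, ?_, ?_, ?_, ?_, ?_⟩
      · intro e he
        rcases Finset.mem_insert.1 he with rfl | he'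
        · exact ⟨by omega, by omega, by omega, hvfacts.2.1, hvfacts.2.2.1⟩
        · have hb := I.bnd e he'
          exact ⟨by omega, hb.2⟩
      · intro u' v' v'' h1 h2
        rcases Finset.mem_insert.1 h1 with he1 | he1 <;>
          rcases Finset.mem_insert.1 h2 with he2 | he2
        · rw [Prod.ext_iff] at he1 he2; simp only at he1 he2; omega
        · exfalso
          have := (I.bnd _ he2).1
          rw [Prod.ext_iff] at he1; simp only at he1
          omega
        · exfalso
          have := (I.bnd _ he1).1
          rw [Prod.ext_iff] at he2; simp only at he2
          omega
        · exact I.lu he1 he2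
      · intro u' u'' v' h1 h2
        rcases Finset.mem_insert.1 h1 with he1 | he1 <;>
          rcases Finset.mem_insert.1 h2 with he2 | he2
        · rw [Prod.ext_iff] at he1 he2; simp only at he1 he2; omega
        · exfalso
          apply hvfacts.2.2.2
          rw [Prod.ext_iff] at he1; simp only at he1
          rw [Finset.mem_image]
          exact ⟨(u'', v'), he2, he1.2⟩
        · exfalso
          apply hvfacts.2.2.2
          rw [Prod.ext_iff] at he2; simp only at he2
          rw [Finset.mem_image]
          exact ⟨(u', v'), he1, he2.2⟩
        · exact I.ru he1 he2
      · intro u' hu1 hu2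
        rcases Nat.lt_or_ge u u' with h | h
        · rw [← I.lep u' h hu2]
          constructor
          · rintro ⟨v', hv'⟩
            rcases Finset.mem_insert.1 hv' with he | he
            · rw [Prod.ext_iff] at he; simp only at he; omega
            · exact ⟨v', he⟩
          · rintro ⟨v', hv'⟩
            exact ⟨v', Finset.mem_insert_of_mem hv'⟩
        · have : u' = u := by omega
          subst this
          simp only [hiT]
          refine ⟨fun _ => by simpa using hiT, fun _ => ⟨v, Finset.mem_insert_self _ _⟩⟩
      · intro u' v' hmem
        have hfilter_eq : ∀ w, u ≤ w →
            (insert (u, v) B).filter (fun e => w < e.1) = B.filter (fun e => w < e.1) := by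
          intro w hw
          rw [Finset.filter_insert, if_neg (by simp; omega)]
        rcases Finset.mem_insert.1 hmem with he | he
        · rw [Prod.ext_iff] at he; simp only at he
          have hRieq : RiSet n S (insert (u, v) B) u = RiSet n S B u := by
            rw [RiSet, RiSet, hfilter_eq u (le_refl u)]
          rw [he.1, he.2, hRieq, hvrank]
          exact ⟨hvR, by omega⟩
        · have hb := I.bnd _ he
          have : RiSet n S (insert (u, v) B) u' = RiSet n S B u' := by
            rw [RiSet, RiSet, hfilter_eq u' (by omega)]
          rw [this]
          exact I.rk u' v' he

lemma good_of_inv0 {B : Finset (ℕ × ℕ)} (I : Inv n S T a 0 B)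
    (hS : S ⊆ Finset.Icc 1 n) (hT : T ⊆ Finset.Icc 1 n) (hcard : S.card = T.card) :
    Good n S T B := by
  have himg : B.image Prod.snd = Finset.Icc 1 n \ S := by
    apply Finset.eq_of_subset_of_card_le
    · intro v hv
      simp only [Finset.mem_image] at hv
      obtain ⟨e, he, rfl⟩ := hv
      have hb := I.bnd e he
      simp only [Finset.mem_sdiff, Finset.mem_Icc]
      exact ⟨⟨by omega, hb.2.2.2.1⟩, hb.2.2.2.2⟩
    · rw [inv_card_snd I, inv_card_left I]
      rw [Finset.card_sdiff_of_subset hT, Finset.card_sdiff_of_subset hS, hcard]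
  constructor
  · intro e he
    have hb := I.bnd e he
    simp only [Finset.mem_Icc]
    exact ⟨⟨by omega, hb.2.1⟩, ⟨by omega, hb.2.2.2.1⟩, hb.2.2.1⟩
  · intro i j j' h1 h2
    exact I.lu h1 h2
  · intro u u' j h1 h2
    exact I.ru h1 h2
  · intro i hi
    rw [Finset.mem_Icc] at hi
    exact I.lep i (by omega) hi.2
  · intro j hj
    constructor
    · rintro ⟨u, hu⟩
      exact (I.bnd _ hu).2.2.2.2
    · intro hjS
      have : j ∈ B.image Prod.snd := by
        rw [himg]
        exact Finset.mem_sdiff.2 ⟨hj, hjS⟩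
      simp only [Finset.mem_image] at this
      obtain ⟨e, he, rfl⟩ := this
      exact ⟨e.1, by simpa using he⟩

lemma phi_of_inv0 {B : Finset (ℕ × ℕ)} (I : Inv n S T a 0 B) (G : Good n S T B)
    (ha0 : ∀ i, i ∉ Finset.Icc 1 n \ T → a i = 0) :
    phi n T B = a := by
  funext i
  by_cases hi : i ∈ Finset.Icc 1 n \ T
  · rw [phi, if_pos hi]
    obtain ⟨hi1, hi2⟩ := Finset.mem_sdiff.1 hi
    obtain ⟨j, hij⟩ := (G.left_iff i hi1).2 hi2
    have := (I.rk i j hij).2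
    rw [cval_eq_rank G hij]
    omega
  · rw [phi, if_neg hi, ha0 i hi]

end PnST

theorem pnST_bij_sequences (n : ℕ) (S T : Finset ℕ)
    (hS : S ⊆ Finset.Icc 1 n) (hT : T ⊆ Finset.Icc 1 n) (hcard : S.card = T.card) :
    ∃ e : {P // P ∈ pnST n S T} ≃
        {a : ℕ → ℕ // (∀ i ∈ Finset.Icc 1 n \ T, 1 ≤ a i ∧ a i ≤ hST n S T i) ∧
          (∀ i, i ∉ Finset.Icc 1 n \ T → a i = 0)},
      ∀ P : {P // P ∈ pnST n S T},
        cr2 (arcsOf P.val) = ∑ i ∈ Finset.Icc 1 n \ T, ((e P).val i - 1) := by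
  classical
  have goodP : ∀ P : {P // P ∈ pnST n S T}, PnST.Good n S T (arcsOf P.val) :=
    fun P => PnST.good_arcsOf P.prop
  set F : {P // P ∈ pnST n S T} →
      {a : ℕ → ℕ // (∀ i ∈ Finset.Icc 1 n \ T, 1 ≤ a i ∧ a i ≤ hST n S T i) ∧
        (∀ i, i ∉ Finset.Icc 1 n \ T → a i = 0)} :=
    fun P => ⟨PnST.phi n T (arcsOf P.val),
      fun i hi => PnST.phi_bounds (goodP P) i hi,
      fun i hi => by rw [PnST.phi, if_neg hi]⟩ with hF
  have hinj : Function.Injective F := by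
    intro P Q h
    have h' : PnST.phi n T (arcsOf P.val) = PnST.phi n T (arcsOf Q.val) :=
      congrArg Subtype.val h
    exact Subtype.ext (PnST.arcsOf_injective P.prop Q.prop
      (PnST.phi_injective (goodP P) (goodP Q) h'))
  have hsurj : Function.Surjective F := by
    rintro ⟨a, ha1, ha2⟩
    obtain ⟨B, I⟩ := PnST.inv_exists hS hT ha1 n 0 (by omega)
    have G := PnST.good_of_inv0 I hS hT hcard
    refine ⟨⟨PnST.mkPart G, PnST.mkPart_mem G hS hT⟩, ?_⟩
    apply Subtype.ext
    show PnST.phi n T (arcsOf (PnST.mkPart G)) = a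
    rw [PnST.arcs_mkPart G]
    exact PnST.phi_of_inv0 I G ha2
  refine ⟨Equiv.ofBijective F ⟨hinj, hsurj⟩, ?_⟩
  intro P
  have hval : ((Equiv.ofBijective F ⟨hinj, hsurj⟩) P).val = PnST.phi n T (arcsOf P.val) := rfl
  rw [hval, PnST.cr2_eq_sum (goodP P)]
  apply Finset.sum_congr rfl
  intro i hi
  rw [PnST.phi, if_pos hi]
  omega
end

section
/- Let π be a permutation of [m] and let M_π be the matching of [2m] with arcs (m+1−π(i), i+m) for 1 ≤ i ≤ m. Then pmaj(M_π) = maj(π). -/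
open Finset
open scoped Classical

def desSum (l : List ℕ) : ℕ :=
  ∑ i ∈ Finset.range (l.length - 1), if l.getD (i+1) 0 < l.getD i 0 then 1 else 0

lemma desList_cons₂ (a b : ℕ) (t : List ℕ) :
    desList (a :: b :: t) = (if b < a then 1 else 0) + desList (b :: t) := by
  simp only [desList, List.zip, List.tail, List.zipWith]
  by_cases h : b < a <;> simp [h] <;> omega

lemma desList_eq_desSum : ∀ l : List ℕ, desList l = desSum l
  | [] => by simp [desList, desSum]
  | [a] => by simp [desList, desSum]
  | a :: b :: t => by
    have ih := desList_eq_desSum (b :: t)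
    rw [desList_cons₂, ih]
    simp only [desSum, List.length_cons, Nat.add_sub_cancel]
    rw [Finset.sum_range_succ' _ t.length]
    simp only [List.getD_cons_succ, List.getD_cons_zero]
    omega

lemma majList_cons (a : ℕ) (t : List ℕ) (ht : t ≠ []) :
    majList (a :: t) = (if t.getD 0 0 < a then 1 else 0) + desList t + majList t := by
  obtain ⟨n, hn⟩ : ∃ n, t.length = n + 1 := ⟨t.length - 1, by cases t <;> simp_all⟩
  rw [desList_eq_desSum]
  simp only [majList, desSum, List.length_cons, hn, Nat.add_sub_cancel]
  rw [Finset.sum_range_succ' _ n]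
  simp only [List.getD_cons_succ, List.getD_cons_zero, Nat.zero_add]
  have : ∀ i ∈ Finset.range n, (if t.getD (i+1) 0 < t.getD i 0 then i + 1 + 1 else 0)
      = (if t.getD (i+1) 0 < t.getD i 0 then 1 else 0) + (if t.getD (i+1) 0 < t.getD i 0 then i + 1 else 0) := by
    intro i _; split_ifs <;> ring
  rw [Finset.sum_congr rfl this, Finset.sum_add_distrib]
  omega

lemma sum_desList_drop : ∀ l : List ℕ,
    ∑ k ∈ Finset.range l.length, desList (l.drop k) = majList l
  | [] => by simp [majList]
  | [a] => by simp [majList, desList]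
  | a :: b :: t => by
    have ih := sum_desList_drop (b :: t)
    rw [List.length_cons, Finset.sum_range_succ' _ _]
    simp only [List.drop_succ_cons, List.drop_zero] at *
    rw [ih, majList_cons a (b::t) (by simp), desList_cons₂]
    simp only [List.getD_cons_zero]
    omega

-- generic fold lemmas
lemma foldr_phase1 (G : List (ℕ×ℕ) × ℕ → ℕ → List (ℕ×ℕ) × ℕ) (arcL : List (ℕ×ℕ))
    (LL : List ℕ) (m : ℕ)
    (hG : ∀ c j, j < m → G (arcL.drop (j+1), c) (m+1+j) = (arcL.drop j, c + desList (LL.drop j)))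
    (hlen : arcL.length = m) :
    ∀ d j, j + d = m →
      (List.range' (m+1+j) d).foldr (fun x st => G st x) ([], 0)
        = (arcL.drop j, ∑ k ∈ Finset.range d, desList (LL.drop (j+k))) := by
  intro d
  induction d with
  | zero =>
    intro j hj
    simp [List.drop_eq_nil_of_le (le_of_eq (by omega : arcL.length = j))]
  | succ d ih =>
    intro j hj
    rw [List.range'_succ, List.foldr_cons,
      show m + 1 + j + 1 = m + 1 + (j + 1) from by omega, ih (j+1) (by omega),
      hG (∑ k ∈ Finset.range d, desList (LL.drop (j+1+k))) j (by omega)]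
    have hs : ∑ k ∈ Finset.range (d+1), desList (LL.drop (j+k))
        = ∑ k ∈ Finset.range d, desList (LL.drop (j+1+k)) + desList (LL.drop j) := by
      rw [Finset.sum_range_succ' (fun k => desList (LL.drop (j+k))) d]
      simp only [Nat.add_zero]
      congr 1
      apply Finset.sum_congr rfl
      intro k _
      congr 2
      omega
    rw [hs]

lemma foldr_phase2 (G : List (ℕ×ℕ) × ℕ → ℕ → List (ℕ×ℕ) × ℕ) :
    ∀ (l : List ℕ) (st : List (ℕ×ℕ) × ℕ), (∀ s i, i ∈ l → (G s i).2 = s.2) →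
      (l.foldr (fun x st => G st x) st).2 = st.2 := by
  intro l
  induction l with
  | nil => intro st _; rfl
  | cons a t ih =>
    intro st h
    rw [List.foldr_cons, h _ a (by simp), ih st (fun s i hi => h s i (by simp [hi]))]

lemma sort_Icc_one (n : ℕ) : ((Finset.Icc 1 n).sort (· ≤ ·)) = List.range' 1 n := by
  apply List.Perm.eq_of_pairwise' (Finset.pairwise_sort _ _)
    ((List.pairwise_lt_range' (s := 1) (n := n)).imp le_of_lt) ?_
  apply List.perm_of_nodup_nodup_toFinset_eq (Finset.sort_nodup _ _)
    (List.nodup_range' (s := 1) (n := n) 1 Nat.one_pos)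
  ext x
  simp only [List.mem_toFinset, List.mem_range', Finset.mem_sort, Finset.mem_Icc, one_mul]
  constructor
  · intro h; exact ⟨x - 1, by omega, by omega⟩
  · rintro ⟨i, hi, rfl⟩; omega

theorem pmaj_Mpi_eq_maj (m : ℕ) (π : Equiv.Perm (Fin m)) :
    pmajArcs (Mpi m π) = majPerm π := by
  set A := Mpi m π with hA
  set g : Fin m → ℕ × ℕ := fun i => (m + 1 - ((π i : ℕ) + 1), ((i : ℕ) + 1) + m) with hg
  set arcL : List (ℕ × ℕ) := List.ofFn g with harcL
  set L : List ℕ := List.ofFn (fun i : Fin m => (π i : ℕ) + 1) with hL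
  have hginj : Function.Injective g := by
    intro a b hab
    have : ((a : ℕ) + 1) + m = ((b : ℕ) + 1) + m := congrArg Prod.snd hab
    exact Fin.ext (by omega)
  have hAg : A = Finset.univ.image g := rfl
  -- labels
  have hlabel : ∀ i : Fin m, labelArc A (g i) = (π i : ℕ) + 1 := by
    intro i
    have hπi : (π i : ℕ) < m := (π i).isLt
    unfold labelArc
    congr 1
    rw [hAg, Finset.filter_image, Finset.card_image_of_injective _ hginj]
    have : Finset.univ.filter (fun k : Fin m => (g i).1 < (g k).1)
        = Finset.univ.filter (fun k : Fin m => π k < π i) := by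
      apply Finset.filter_congr
      intro k _
      have h1 : (π k : ℕ) < m := (π k).isLt
      simp only [hg, Fin.lt_def]
      constructor <;> intro h <;> omega
    rw [this]
    have : Finset.univ.filter (fun k : Fin m => π k < π i)
        = (Finset.univ.filter (fun x : Fin m => x < π i)).image π.symm := by
      ext k
      simp only [Finset.mem_filter, Finset.mem_image, Finset.mem_univ, true_and]
      constructor
      · intro h; exact ⟨π k, h, by simp⟩
      · rintro ⟨x, hx, rfl⟩; simpa using hx
    rw [this, Finset.card_image_of_injective _ π.symm.injective]
    rw [show (Finset.univ.filter (fun x : Fin m => x < π i)) = Finset.Iio (π i) from by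
      ext x; simp]
    exact Fin.card_Iio (π i)
  have hmap : arcL.map (labelArc A) = L := by
    rw [harcL, List.map_ofFn, hL]
    congr 1
    funext i
    exact hlabel i
  -- endpoints
  have hend : (A.image Prod.fst) ∪ (A.image Prod.snd) = Finset.Icc 1 (m + m) := by
    ext x
    rw [hAg, Finset.image_image, Finset.image_image]
    simp only [Finset.mem_union, Finset.mem_image, Finset.mem_Icc,
      Finset.mem_univ, true_and, Function.comp]
    constructor
    · rintro (⟨i, rfl⟩ | ⟨i, rfl⟩) <;>
      · have := (π i).isLt
        have := i.isLt
        simp only [hg, Function.comp_apply]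
        omega
    · intro hx
      by_cases hxm : x ≤ m
      · left
        refine ⟨π.symm ⟨m - x, by omega⟩, ?_⟩
        simp only [hg, Equiv.apply_symm_apply]
        omega
      · right
        refine ⟨⟨x - m - 1, by omega⟩, ?_⟩
        simp only [hg]
        omega
  have hlen : arcL.length = m := by simp [harcL]
  -- the step function
  set F : List (ℕ×ℕ) × ℕ → ℕ → List (ℕ×ℕ) × ℕ := fun st x =>
    ((A.filter (fun e => e.2 = x)).toList ++ st.1.filter (fun e => e.1 ≠ x),
     st.2 + if ((A.filter (fun e => e.2 = x)).toList).isEmpty then 0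
       else desList (((A.filter (fun e => e.2 = x)).toList
          ++ st.1.filter (fun e => e.1 ≠ x)).map (labelArc A))) with hF
  have key : pmajArcs A
      = ((List.range' 1 (m+m)).foldr (fun x st => F st x) ([], 0)).2 := by
    unfold pmajArcs
    rw [hend, sort_Icc_one, List.foldl_reverse]
  have hG1 : ∀ c j, j < m → F (arcL.drop (j+1), c) (m+1+j)
      = (arcL.drop j, c + desList (L.drop j)) := by
    intro c j hj
    have hfilt : A.filter (fun e => e.2 = m+1+j) = {g ⟨j, hj⟩} := by
      ext e
      simp only [Finset.mem_filter, hAg, Finset.mem_image, Finset.mem_univ, true_and,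
        Finset.mem_singleton]
      constructor
      · rintro ⟨⟨i, rfl⟩, h2⟩
        have : (i : ℕ) = j := by
          simp only [hg] at h2
          omega
        exact congrArg g (Fin.ext this)
      · rintro rfl
        refine ⟨⟨⟨j, hj⟩, rfl⟩, ?_⟩
        simp only [hg]
        omega
    have hkeep : (arcL.drop (j+1)).filter (fun e => e.1 ≠ m+1+j) = arcL.drop (j+1) := by
      apply List.filter_eq_self.mpr
      intro e he
      obtain ⟨i, rfl⟩ := (List.mem_ofFn (f := g) (a := e)).mp (List.mem_of_mem_drop he)
      have := (π i).isLt
      simp only [hg, decide_eq_true_eq, ne_eq]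
      omega
    have hdropj : arcL.drop j = g ⟨j, hj⟩ :: arcL.drop (j+1) := by
      have hjlen : j < arcL.length := by rw [hlen]; exact hj
      rw [List.drop_eq_getElem_cons hjlen]
      congr 1
      simp [harcL]
    simp only [hF]
    rw [hfilt, Finset.toList_singleton]
    simp only [hkeep, List.singleton_append, List.isEmpty_cons, Bool.false_eq_true, if_false]
    rw [← hdropj, List.map_drop, hmap]
  have hG2 : ∀ s i, i ∈ List.range' 1 m → (F s i).2 = s.2 := by
    intro s i hi
    have him : i ≤ m := by
      have := List.mem_range'_1.mp hi
      omega
    have hempty : A.filter (fun e => e.2 = i) = ∅ := by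
      apply Finset.filter_eq_empty_iff.mpr
      intro e he
      obtain ⟨k, _, rfl⟩ := Finset.mem_image.mp (hAg ▸ he)
      simp only [hg]
      omega
    simp only [hF, hempty, Finset.toList_empty, List.isEmpty_nil, if_true]
    exact Nat.add_zero s.2
  have hsplit : List.range' 1 (m+m) = List.range' 1 m ++ List.range' (m+1+0) m := by
    have h := List.range'_append (s := 1) (m := m) (n := m) (step := 1)
    simp only [one_mul] at h
    rw [show m+1+0 = 1+m from by omega, ← h]
  rw [key, hsplit, List.foldr_append,
    foldr_phase1 F arcL L m hG1 hlen m 0 (by omega),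
    foldr_phase2 F (List.range' 1 m) _ hG2]
  have hm : L.length = m := by simp [hL]
  have := sum_desList_drop L
  rw [hm] at this
  simp only [Nat.zero_add] at *
  rw [this]
  rfl
end
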